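/- arXiv:2311.12104 — 10 statements merged into one kernel-verified Lean document; each statement's English description precedes it below -/
import Mathlib

section
/- Let n ≥ 1 and D ≥ 3 be integers. The sequence β_p = −2^p·(p−1)·binom(n,p)·(D(D−1)/(D−2))^p, for 0 ≤ p ≤ n, satisfies β_0 = 1, β_1 = 0, and the cosmological constraint system: for every integer p with 0 ≤ p ≤ n−2, ((D−2)²/(2D²))·(p+1)·(p+2)·β_{p+2} − (2(D−1)(D−2)/D)·(p+1)·(n−p−1)·β_{p+1} + 2(D−1)²·(n−p)·(n−p−1)·β_p = 0. -/
theorem stmt_0 (n D : ℕ) (hn : 1 ≤ n) (hD : 3 ≤ D) :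
    let β : ℕ → ℝ := fun p =>
      -(2 : ℝ) ^ p * ((p : ℝ) - 1) * (n.choose p : ℝ) *
        ((D : ℝ) * ((D : ℝ) - 1) / ((D : ℝ) - 2)) ^ p
    β 0 = 1 ∧ β 1 = 0 ∧
      ∀ p : ℕ, p + 2 ≤ n →
        ((D : ℝ) - 2) ^ 2 / (2 * (D : ℝ) ^ 2) * ((p : ℝ) + 1) * ((p : ℝ) + 2) * β (p + 2)
          - 2 * ((D : ℝ) - 1) * ((D : ℝ) - 2) / (D : ℝ) * ((p : ℝ) + 1) *
              ((n : ℝ) - (p : ℝ) - 1) * β (p + 1)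
          + 2 * ((D : ℝ) - 1) ^ 2 * ((n : ℝ) - (p : ℝ)) * ((n : ℝ) - (p : ℝ) - 1) * β p = 0 := by
  intro β
  have hD0 : (D : ℝ) ≠ 0 := by positivity
  have hD2 : (D : ℝ) - 2 ≠ 0 := by
    have : (3 : ℝ) ≤ (D : ℝ) := by exact_mod_cast hD
    linarith
  refine ⟨by simp [β], by simp [β], ?_⟩
  intro p hp
  have hp1 : p + 1 ≤ n := by omega
  have h1 : (n.choose (p + 1) : ℝ) * ((p : ℝ) + 1) =
      (n.choose p : ℝ) * ((n : ℝ) - (p : ℝ)) := by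
    have := Nat.choose_succ_right_eq n p
    have hle : p ≤ n := by omega
    have : ((n.choose (p + 1) * (p + 1) : ℕ) : ℝ) = ((n.choose p * (n - p) : ℕ) : ℝ) := by
      exact_mod_cast congrArg (fun x : ℕ => (x : ℝ)) this
    push_cast [Nat.cast_sub hle] at this
    linarith
  have h2 : (n.choose (p + 2) : ℝ) * ((p : ℝ) + 2) =
      (n.choose (p + 1) : ℝ) * ((n : ℝ) - (p : ℝ) - 1) := by
    have := Nat.choose_succ_right_eq n (p + 1)
    have : ((n.choose (p + 2) * (p + 2) : ℕ) : ℝ) = ((n.choose (p + 1) * (n - (p + 1)) : ℕ) : ℝ) := by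
      exact_mod_cast congrArg (fun x : ℕ => (x : ℝ)) this
    push_cast [Nat.cast_sub hp1] at this
    linarith
  have hq1 : (p : ℝ) + 1 ≠ 0 := by positivity
  have hq2 : (p : ℝ) + 2 ≠ 0 := by positivity
  have hB : (n.choose (p + 1) : ℝ) = (n.choose p : ℝ) * ((n : ℝ) - (p : ℝ)) / ((p : ℝ) + 1) := by
    field_simp
    linarith
  have hC : (n.choose (p + 2) : ℝ) =
      (n.choose p : ℝ) * ((n : ℝ) - (p : ℝ)) * ((n : ℝ) - (p : ℝ) - 1) /
        (((p : ℝ) + 1) * ((p : ℝ) + 2)) := by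
    rw [hB] at h2
    field_simp at h2 ⊢
    linarith
  simp only [β, hB, hC]
  push_cast
  rw [pow_succ, pow_succ, pow_succ, pow_succ (_ / _) (p + 1), pow_succ (_ / _) p,
    pow_succ (2 : ℝ) p]
  generalize ((D : ℝ) * ((D : ℝ) - 1) / ((D : ℝ) - 2)) ^ p = X
  field_simp
  ring
end

section
/- Let n ≥ 1 and D ≥ 3 be integers, and let β_0, …, β_n be real numbers with β_1 = 0 which satisfy, for every integer p with 0 ≤ p ≤ n−2, ((D−2)²/(2D²))·(p+1)·(p+2)·β_{p+2} − (2(D−1)(D−2)/D)·(p+1)·(n−p−1)·β_{p+1} + 2(D−1)²·(n−p)·(n−p−1)·β_p = 0. Then β_p = β_0 · (−2^p·(p−1)·binom(n,p)·(D(D−1)/(D−2))^p) for every 0 ≤ p ≤ n. -/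
theorem stmt_1 (n D : ℕ) (hn : 1 ≤ n) (hD : 3 ≤ D) (β : ℕ → ℝ)
    (hβ1 : β 1 = 0)
    (hcon : ∀ p : ℕ, p + 2 ≤ n →
      ((D : ℝ) - 2) ^ 2 / (2 * (D : ℝ) ^ 2) * ((p : ℝ) + 1) * ((p : ℝ) + 2) * β (p + 2)
        - 2 * ((D : ℝ) - 1) * ((D : ℝ) - 2) / (D : ℝ) * ((p : ℝ) + 1) *
            ((n : ℝ) - (p : ℝ) - 1) * β (p + 1)
        + 2 * ((D : ℝ) - 1) ^ 2 * ((n : ℝ) - (p : ℝ)) * ((n : ℝ) - (p : ℝ) - 1) * β p = 0) :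
    ∀ p : ℕ, p ≤ n →
      β p = β 0 * (-(2 : ℝ) ^ p * ((p : ℝ) - 1) * (n.choose p : ℝ) *
        ((D : ℝ) * ((D : ℝ) - 1) / ((D : ℝ) - 2)) ^ p) := by
  have hD3 : (3:ℝ) ≤ (D:ℝ) := by exact_mod_cast hD
  have hd2 : ((D:ℝ) - 2) ≠ 0 := by linarith
  have hd0 : (D:ℝ) ≠ 0 := by linarith
  intro p
  induction p using Nat.strong_induction_on with
  | _ p ih =>
    match p with
    | 0 => intro _; norm_num
    | 1 => intro _; rw [hβ1]; norm_num
    | (q+2) =>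
      intro hq
      have hb0 := ih q (by omega) (by omega)
      have hb1 := ih (q+1) (by omega) (by omega)
      have hE := hcon q hq
      have hA : ((D:ℝ)-2)^2/(2*(D:ℝ)^2)*((q:ℝ)+1)*((q:ℝ)+2) ≠ 0 := by
        apply mul_ne_zero; apply mul_ne_zero
        · positivity
        · positivity
        · positivity
      -- choose identities
      have hq1n : q + 1 ≤ n := by omega
      have hqn : q ≤ n := by omega
      have h1 : ((n.choose (q+1)):ℝ) = (n.choose q : ℝ) * ((n:ℝ) - q) / ((q:ℝ)+1) := by
        have := Nat.choose_succ_right_eq n q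
        have hc : ((n.choose (q+1)):ℝ) * ((q:ℝ)+1) = (n.choose q : ℝ) * ((n:ℝ) - q) := by
          have := congrArg (Nat.cast : ℕ → ℝ) this
          push_cast [Nat.cast_sub hqn] at this
          linarith [this]
        field_simp
        linarith [hc]
      have h2 : ((n.choose (q+2)):ℝ) = (n.choose (q+1) : ℝ) * ((n:ℝ) - q - 1) / ((q:ℝ)+2) := by
        have := Nat.choose_succ_right_eq n (q+1)
        have hc : ((n.choose (q+2)):ℝ) * ((q:ℝ)+2) = (n.choose (q+1) : ℝ) * ((n:ℝ) - q - 1) := by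
          have := congrArg (Nat.cast : ℕ → ℝ) this
          push_cast [Nat.cast_sub hq1n] at this
          push_cast at this
          linarith [this]
        field_simp
        linarith [hc]
      apply mul_left_cancel₀ hA
      have hEq : ((D:ℝ)-2)^2/(2*(D:ℝ)^2)*((q:ℝ)+1)*((q:ℝ)+2) * β (q+2)
          = 2 * ((D : ℝ) - 1) * ((D : ℝ) - 2) / (D : ℝ) * ((q : ℝ) + 1) *
              ((n : ℝ) - (q : ℝ) - 1) * β (q + 1)
            - 2 * ((D : ℝ) - 1) ^ 2 * ((n : ℝ) - (q : ℝ)) * ((n : ℝ) - (q : ℝ) - 1) * β q := by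
        linarith [hE]
      rw [hEq, hb0, hb1, h2, h1]
      push_cast
      simp only [pow_add]
      generalize ((D:ℝ) * ((D:ℝ) - 1) / ((D:ℝ) - 2)) ^ q = Z
      have hq1 : ((q:ℝ)+1) ≠ 0 := by positivity
      have hq2 : ((q:ℝ)+2) ≠ 0 := by positivity
      field_simp
      ring
end

section
/- Let D ≥ 3 be an integer and set c = D(D−1)/(D−2). For each integer n ≥ 1 define the function C_n : ℝ³ → ℝ by C_n(x,y,z) = x^n − Σ_{p=1}^{⌊n/2⌋} (2p−1)·binom(n,2p)·c^{2p}·x^{n−2p}·(4y)^p − Σ_{p=1}^{⌊(n−1)/2⌋} 16p·binom(n,2p+1)·c^{2p+1}·x^{n−2p−1}·(4y)^{p−1}·z. Then for every integer n ≥ 3 and all real x, y, z: (n−3)·C_n(x,y,z) = 2(n−2)·x·C_{n−1}(x,y,z) − (n−1)·C_2(x,y,z)·C_{n−2}(x,y,z). -/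
/-- The order-`n` Cosmological Gravity density `C^{(n)}` of dimension `D`, regarded as a
polynomial in the invariants `R → x`, `4·K₂ → 4y` (via `K₂ → y`), `K₃ → z`. -/
noncomputable def cosmoC (D n : ℕ) (x y z : ℝ) : ℝ :=
  x ^ n
    - ∑ p ∈ Finset.Icc 1 (n / 2),
        (2 * (p : ℝ) - 1) * (n.choose (2 * p) : ℝ) *
          ((D : ℝ) * ((D : ℝ) - 1) / ((D : ℝ) - 2)) ^ (2 * p) * x ^ (n - 2 * p) * (4 * y) ^ p
    - ∑ p ∈ Finset.Icc 1 ((n - 1) / 2),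
        16 * (p : ℝ) * (n.choose (2 * p + 1) : ℝ) *
          ((D : ℝ) * ((D : ℝ) - 1) / ((D : ℝ) - 2)) ^ (2 * p + 1) * x ^ (n - 2 * p - 1) *
          (4 * y) ^ (p - 1) * z

namespace CosmoAux

noncomputable def cc (D : ℕ) : ℝ := (D : ℝ) * ((D : ℝ) - 1) / ((D : ℝ) - 2)

noncomputable def tA (c x y : ℝ) (m p : ℕ) : ℝ :=
  (2 * (p : ℝ) - 1) * (m.choose (2 * p) : ℝ) * c ^ (2 * p) * x ^ (m - 2 * p) * (4 * y) ^ p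

noncomputable def tB (c x y z : ℝ) (m p : ℕ) : ℝ :=
  16 * (p : ℝ) * (m.choose (2 * p + 1) : ℝ) * c ^ (2 * p + 1) * x ^ (m - 2 * p - 1) *
    (4 * y) ^ (p - 1) * z

lemma pasc2 (m j : ℕ) :
    (m + 2).choose (j + 2) = m.choose j + 2 * m.choose (j + 1) + m.choose (j + 2) := by
  rw [show m + 2 = m + 1 + 1 by omega, show j + 2 = j + 1 + 1 by omega,
      Nat.choose_succ_succ, Nat.choose_succ_succ, Nat.choose_succ_succ]
  ring

lemma hyq (w : ℝ) (q : ℕ) : (q : ℝ) * w ^ (q - 1) * w = (q : ℝ) * w ^ q := by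
  cases q with
  | zero => simp
  | succ r => rw [Nat.add_sub_cancel, pow_succ]; push_cast; ring

lemma cosmoC_eq (D m N : ℕ) (x y z : ℝ) (hm : m ≤ 2 * N) :
    cosmoC D m x y z
      = x ^ m - ∑ p ∈ Finset.Icc 1 N, tA (cc D) x y m p
          - ∑ p ∈ Finset.Icc 1 N, tB (cc D) x y z m p := by
  have e1 : (∑ p ∈ Finset.Icc 1 (m / 2), tA (cc D) x y m p)
      = ∑ p ∈ Finset.Icc 1 N, tA (cc D) x y m p := by
    refine Finset.sum_subset (Finset.Icc_subset_Icc_right (by omega)) ?_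
    intro p hp hnp
    simp only [Finset.mem_Icc] at hp hnp
    have : m < 2 * p := by omega
    simp [tA, Nat.choose_eq_zero_of_lt this]
  have e2 : (∑ p ∈ Finset.Icc 1 ((m - 1) / 2), tB (cc D) x y z m p)
      = ∑ p ∈ Finset.Icc 1 N, tB (cc D) x y z m p := by
    refine Finset.sum_subset (Finset.Icc_subset_Icc_right (by omega)) ?_
    intro p hp hnp
    simp only [Finset.mem_Icc] at hp hnp
    have : m < 2 * p + 1 := by omega
    simp [tB, Nat.choose_eq_zero_of_lt this]
  rw [← e1, ← e2]
  simp only [cosmoC, tA, tB, cc]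

lemma cosmoC_two (D : ℕ) (x y z : ℝ) :
    cosmoC D 2 x y z = x ^ 2 - 4 * (cc D) ^ 2 * y := by
  rw [cosmoC]
  norm_num [cc]
  ring

lemma keyA (c x y : ℝ) (n p : ℕ) (hn : 3 ≤ n) (hp : 1 ≤ p) :
    ((n : ℝ) - 3) * tA c x y n p
      = 2 * ((n : ℝ) - 2) * x * tA c x y (n - 1) p
        - ((n : ℝ) - 1) * x ^ 2 * tA c x y (n - 2) p
        + ((n : ℝ) - 1) * (4 * c ^ 2 * y) * tA c x y (n - 2) (p - 1) := by
  obtain ⟨q, rfl⟩ : ∃ q, p = q + 1 := ⟨p - 1, by omega⟩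
  simp only [tA, Nat.add_sub_cancel]
  rcases Nat.lt_or_ge n (2 * (q + 1)) with h | h
  · rw [Nat.choose_eq_zero_of_lt (show n < 2 * (q + 1) by omega),
        Nat.choose_eq_zero_of_lt (show n - 1 < 2 * (q + 1) by omega),
        Nat.choose_eq_zero_of_lt (show n - 2 < 2 * (q + 1) by omega),
        Nat.choose_eq_zero_of_lt (show n - 2 < 2 * q by omega)]
    push_cast; ring
  rcases (show n = 2 * q + 2 ∨ n = 2 * q + 3 ∨ 2 * q + 4 ≤ n by omega) with rfl | rfl | h2
  · rw [show 2 * q + 2 - 1 = 2 * q + 1 by omega, show 2 * q + 2 - 2 = 2 * q by omega,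
        show 2 * (q + 1) = 2 * q + 2 by omega]
    rw [show 2 * q + 2 - (2 * q + 2) = 0 by omega, show 2 * q + 1 - (2 * q + 2) = 0 by omega,
        show 2 * q - (2 * q + 2) = 0 by omega, show 2 * q - 2 * q = 0 by omega]
    rw [Nat.choose_self, Nat.choose_eq_zero_of_lt (show 2 * q + 1 < 2 * q + 2 by omega),
        Nat.choose_eq_zero_of_lt (show 2 * q < 2 * q + 2 by omega), Nat.choose_self]
    push_cast; ring
  · rw [show 2 * q + 3 - 1 = 2 * q + 2 by omega, show 2 * q + 3 - 2 = 2 * q + 1 by omega,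
        show 2 * (q + 1) = 2 * q + 2 by omega]
    rw [show 2 * q + 3 - (2 * q + 2) = 1 by omega, show 2 * q + 2 - (2 * q + 2) = 0 by omega,
        show 2 * q + 1 - (2 * q + 2) = 0 by omega, show 2 * q + 1 - 2 * q = 1 by omega]
    have hc1 : (2 * q + 3).choose (2 * q + 2) = 2 * q + 3 := by
      rw [show 2 * q + 3 = 2 * q + 2 + 1 by omega]
      exact Nat.choose_succ_self_right _
    have hc2 : (2 * q + 1).choose (2 * q) = 2 * q + 1 :=
      Nat.choose_succ_self_right _
    rw [hc1, hc2, Nat.choose_self,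
        Nat.choose_eq_zero_of_lt (show 2 * q + 1 < 2 * q + 2 by omega)]
    push_cast; ring
  · obtain ⟨k, rfl⟩ : ∃ k, n = 2 * q + 4 + k := ⟨n - (2 * q + 4), by omega⟩
    rw [show 2 * q + 4 + k - 1 = 2 * q + 3 + k by omega,
        show 2 * q + 4 + k - 2 = 2 * q + 2 + k by omega,
        show 2 * (q + 1) = 2 * q + 2 by omega]
    rw [show 2 * q + 4 + k - (2 * q + 2) = k + 2 by omega,
        show 2 * q + 3 + k - (2 * q + 2) = k + 1 by omega,
        show 2 * q + 2 + k - (2 * q + 2) = k by omega,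
        show 2 * q + 2 + k - 2 * q = k + 2 by omega]
    have h1 : (2 * q + 4 + k).choose (2 * q + 2)
        = (2 * q + 2 + k).choose (2 * q) + 2 * (2 * q + 2 + k).choose (2 * q + 1)
          + (2 * q + 2 + k).choose (2 * q + 2) := by
      have := pasc2 (2 * q + 2 + k) (2 * q)
      rw [show 2 * q + 2 + k + 2 = 2 * q + 4 + k by omega] at this
      rw [this]
    have h2' : (2 * q + 3 + k).choose (2 * q + 2)
        = (2 * q + 2 + k).choose (2 * q + 1) + (2 * q + 2 + k).choose (2 * q + 2) := by
      have := Nat.choose_succ_succ (2 * q + 2 + k) (2 * q + 1)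
      simp only [Nat.succ_eq_add_one] at this
      rw [show 2 * q + 2 + k + 1 = 2 * q + 3 + k by omega,
          show 2 * q + 1 + 1 = 2 * q + 2 by omega] at this
      rw [this]
    have habs := Nat.choose_succ_right_eq (2 * q + 2 + k) (2 * q)
    rw [show 2 * q + 2 + k - 2 * q = k + 2 by omega] at habs
    have habsR : ((2 * q + 2 + k).choose (2 * q + 1) : ℝ) * (2 * (q : ℝ) + 1)
        = ((2 * q + 2 + k).choose (2 * q) : ℝ) * ((k : ℝ) + 2) := by exact_mod_cast habs
    rw [h1, h2']
    push_cast
    linear_combination (-2 * c ^ (2 * q + 2) * x ^ (k + 2) * (4 * y) ^ (q + 1)) * habsR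

lemma keyB (c x y z : ℝ) (n p : ℕ) (hn : 3 ≤ n) (hp : 1 ≤ p) :
    ((n : ℝ) - 3) * tB c x y z n p
      = 2 * ((n : ℝ) - 2) * x * tB c x y z (n - 1) p
        - ((n : ℝ) - 1) * x ^ 2 * tB c x y z (n - 2) p
        + ((n : ℝ) - 1) * (4 * c ^ 2 * y) * tB c x y z (n - 2) (p - 1) := by
  obtain ⟨q, rfl⟩ : ∃ q, p = q + 1 := ⟨p - 1, by omega⟩
  simp only [tB, Nat.add_sub_cancel]
  rcases Nat.lt_or_ge n (2 * q + 3) with h | h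
  · rw [Nat.choose_eq_zero_of_lt (show n < 2 * (q + 1) + 1 by omega),
        Nat.choose_eq_zero_of_lt (show n - 1 < 2 * (q + 1) + 1 by omega),
        Nat.choose_eq_zero_of_lt (show n - 2 < 2 * (q + 1) + 1 by omega),
        Nat.choose_eq_zero_of_lt (show n - 2 < 2 * q + 1 by omega)]
    push_cast; ring
  rcases (show n = 2 * q + 3 ∨ n = 2 * q + 4 ∨ 2 * q + 5 ≤ n by omega) with rfl | rfl | h2
  · rw [show 2 * (q + 1) + 1 = 2 * q + 3 by omega, show 2 * (q + 1) = 2 * q + 2 by omega,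
        show 2 * q + 3 - 1 = 2 * q + 2 by omega, show 2 * q + 3 - 2 = 2 * q + 1 by omega]
    rw [show 2 * q + 3 - (2 * q + 2) - 1 = 0 by omega,
        show 2 * q + 2 - (2 * q + 2) - 1 = 0 by omega,
        show 2 * q + 1 - (2 * q + 2) - 1 = 0 by omega,
        show 2 * q + 1 - 2 * q - 1 = 0 by omega]
    rw [Nat.choose_self, Nat.choose_eq_zero_of_lt (show 2 * q + 2 < 2 * q + 3 by omega),
        Nat.choose_eq_zero_of_lt (show 2 * q + 1 < 2 * q + 3 by omega), Nat.choose_self]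
    push_cast
    linear_combination (-32 * ((q : ℝ) + 1) * c ^ (2 * q + 3) * z) * hyq (4 * y) q
  · rw [show 2 * (q + 1) + 1 = 2 * q + 3 by omega, show 2 * (q + 1) = 2 * q + 2 by omega,
        show 2 * q + 4 - 1 = 2 * q + 3 by omega, show 2 * q + 4 - 2 = 2 * q + 2 by omega]
    rw [show 2 * q + 4 - (2 * q + 2) - 1 = 1 by omega,
        show 2 * q + 3 - (2 * q + 2) - 1 = 0 by omega,
        show 2 * q + 2 - (2 * q + 2) - 1 = 0 by omega,
        show 2 * q + 2 - 2 * q - 1 = 1 by omega]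
    have hc1 : (2 * q + 4).choose (2 * q + 3) = 2 * q + 4 := by
      rw [show 2 * q + 4 = 2 * q + 3 + 1 by omega]
      exact Nat.choose_succ_self_right _
    have hc2 : (2 * q + 2).choose (2 * q + 1) = 2 * q + 2 := by
      rw [show 2 * q + 2 = 2 * q + 1 + 1 by omega]
      exact Nat.choose_succ_self_right _
    rw [hc1, hc2, Nat.choose_self,
        Nat.choose_eq_zero_of_lt (show 2 * q + 2 < 2 * q + 3 by omega)]
    push_cast
    linear_combination (-16 * (2 * (q : ℝ) + 3) * (2 * (q : ℝ) + 2) * c ^ (2 * q + 3) * x * z)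
      * hyq (4 * y) q
  · obtain ⟨k, rfl⟩ : ∃ k, n = 2 * q + 5 + k := ⟨n - (2 * q + 5), by omega⟩
    rw [show 2 * (q + 1) + 1 = 2 * q + 3 by omega, show 2 * (q + 1) = 2 * q + 2 by omega,
        show 2 * q + 5 + k - 1 = 2 * q + 4 + k by omega,
        show 2 * q + 5 + k - 2 = 2 * q + 3 + k by omega]
    rw [show 2 * q + 5 + k - (2 * q + 2) - 1 = k + 2 by omega,
        show 2 * q + 4 + k - (2 * q + 2) - 1 = k + 1 by omega,
        show 2 * q + 3 + k - (2 * q + 2) - 1 = k by omega,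
        show 2 * q + 3 + k - 2 * q - 1 = k + 2 by omega]
    have h1 : (2 * q + 5 + k).choose (2 * q + 3)
        = (2 * q + 3 + k).choose (2 * q + 1) + 2 * (2 * q + 3 + k).choose (2 * q + 2)
          + (2 * q + 3 + k).choose (2 * q + 3) := by
      have := pasc2 (2 * q + 3 + k) (2 * q + 1)
      rw [show 2 * q + 3 + k + 2 = 2 * q + 5 + k by omega,
          show 2 * q + 1 + 1 = 2 * q + 2 by omega,
          show 2 * q + 1 + 2 = 2 * q + 3 by omega] at this
      rw [this]
    have h2' : (2 * q + 4 + k).choose (2 * q + 3)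
        = (2 * q + 3 + k).choose (2 * q + 2) + (2 * q + 3 + k).choose (2 * q + 3) := by
      have := Nat.choose_succ_succ (2 * q + 3 + k) (2 * q + 2)
      simp only [Nat.succ_eq_add_one] at this
      rw [show 2 * q + 3 + k + 1 = 2 * q + 4 + k by omega,
          show 2 * q + 2 + 1 = 2 * q + 3 by omega] at this
      rw [this]
    have habs := Nat.choose_succ_right_eq (2 * q + 3 + k) (2 * q + 1)
    rw [show 2 * q + 3 + k - (2 * q + 1) = k + 2 by omega,
        show 2 * q + 1 + 1 = 2 * q + 2 by omega] at habs
    have habsR : ((2 * q + 3 + k).choose (2 * q + 2) : ℝ) * (2 * (q : ℝ) + 2)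
        = ((2 * q + 3 + k).choose (2 * q + 1) : ℝ) * ((k : ℝ) + 2) := by exact_mod_cast habs
    rw [h1, h2']
    push_cast
    linear_combination (-16 * c ^ (2 * q + 3) * x ^ (k + 2) * (4 * y) ^ q * z) * habsR
      - ((2 * (q : ℝ) + 4 + (k : ℝ)) * 16 * ((2 * q + 3 + k).choose (2 * q + 1) : ℝ)
          * c ^ (2 * q + 3) * x ^ (k + 2) * z) * hyq (4 * y) q

lemma sum_shift (f : ℕ → ℝ) (n : ℕ) (hn : 1 ≤ n) :
    ∑ p ∈ Finset.Icc 1 n, f (p - 1) = f 0 + ∑ p ∈ Finset.Icc 1 n, f p - f n := by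
  obtain ⟨m, rfl⟩ : ∃ m, n = m + 1 := ⟨n - 1, by omega⟩
  rw [← Finset.Ico_add_one_right_eq_Icc, Finset.sum_Ico_eq_sum_range, Finset.sum_Ico_eq_sum_range]
  simp only [Nat.add_sub_cancel_left, Nat.add_sub_cancel, Nat.succ_sub_one]
  rw [Finset.sum_range_succ' (fun i => f i) m, Finset.sum_range_succ (fun i => f (1 + i)) m]
  have e : ∀ i, f (1 + i) = f (i + 1) := fun i => by rw [Nat.add_comm]
  simp only [e]
  ring

lemma tA_zero (c x y : ℝ) (m : ℕ) : tA c x y m 0 = -(x ^ m) := by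
  simp [tA]

lemma tA_top (c x y : ℝ) (n : ℕ) (hn : 3 ≤ n) : tA c x y (n - 2) n = 0 := by
  simp [tA, Nat.choose_eq_zero_of_lt (show n - 2 < 2 * n by omega)]

lemma tB_zero (c x y z : ℝ) (m : ℕ) : tB c x y z m 0 = 0 := by
  simp [tB]

lemma tB_top (c x y z : ℝ) (n : ℕ) (hn : 3 ≤ n) : tB c x y z (n - 2) n = 0 := by
  simp [tB, Nat.choose_eq_zero_of_lt (show n - 2 < 2 * n + 1 by omega)]

lemma keyA_sum (c x y : ℝ) (n : ℕ) (hn : 3 ≤ n) :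
    ((n : ℝ) - 3) * ∑ p ∈ Finset.Icc 1 n, tA c x y n p
      = 2 * ((n : ℝ) - 2) * x * ∑ p ∈ Finset.Icc 1 n, tA c x y (n - 1) p
        - ((n : ℝ) - 1) * x ^ 2 * ∑ p ∈ Finset.Icc 1 n, tA c x y (n - 2) p
        + ((n : ℝ) - 1) * (4 * c ^ 2 * y)
            * ((∑ p ∈ Finset.Icc 1 n, tA c x y (n - 2) p) - x ^ (n - 2)) := by
  have step : ∀ p ∈ Finset.Icc 1 n,
      ((n : ℝ) - 3) * tA c x y n p
        = 2 * ((n : ℝ) - 2) * x * tA c x y (n - 1) p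
          - ((n : ℝ) - 1) * x ^ 2 * tA c x y (n - 2) p
          + ((n : ℝ) - 1) * (4 * c ^ 2 * y) * tA c x y (n - 2) (p - 1) :=
    fun p hp => keyA c x y n p hn (Finset.mem_Icc.mp hp).1
  rw [Finset.mul_sum, Finset.sum_congr rfl step, Finset.sum_add_distrib,
      Finset.sum_sub_distrib, ← Finset.mul_sum, ← Finset.mul_sum, ← Finset.mul_sum,
      sum_shift (fun p => tA c x y (n - 2) p) n (by omega), tA_zero, tA_top c x y n hn]
  ring

lemma keyB_sum (c x y z : ℝ) (n : ℕ) (hn : 3 ≤ n) :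
    ((n : ℝ) - 3) * ∑ p ∈ Finset.Icc 1 n, tB c x y z n p
      = 2 * ((n : ℝ) - 2) * x * ∑ p ∈ Finset.Icc 1 n, tB c x y z (n - 1) p
        - ((n : ℝ) - 1) * x ^ 2 * ∑ p ∈ Finset.Icc 1 n, tB c x y z (n - 2) p
        + ((n : ℝ) - 1) * (4 * c ^ 2 * y) * ∑ p ∈ Finset.Icc 1 n, tB c x y z (n - 2) p := by
  have step : ∀ p ∈ Finset.Icc 1 n,
      ((n : ℝ) - 3) * tB c x y z n p
        = 2 * ((n : ℝ) - 2) * x * tB c x y z (n - 1) p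
          - ((n : ℝ) - 1) * x ^ 2 * tB c x y z (n - 2) p
          + ((n : ℝ) - 1) * (4 * c ^ 2 * y) * tB c x y z (n - 2) (p - 1) :=
    fun p hp => keyB c x y z n p hn (Finset.mem_Icc.mp hp).1
  rw [Finset.mul_sum, Finset.sum_congr rfl step, Finset.sum_add_distrib,
      Finset.sum_sub_distrib, ← Finset.mul_sum, ← Finset.mul_sum, ← Finset.mul_sum,
      sum_shift (fun p => tB c x y z (n - 2) p) n (by omega), tB_zero, tB_top c x y z n hn]
  ring

end CosmoAux

theorem stmt_3 (D : ℕ) (hD : 3 ≤ D) :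
    ∀ n : ℕ, 3 ≤ n → ∀ x y z : ℝ,
      ((n : ℝ) - 3) * cosmoC D n x y z
        = 2 * ((n : ℝ) - 2) * x * cosmoC D (n - 1) x y z
          - ((n : ℝ) - 1) * cosmoC D 2 x y z * cosmoC D (n - 2) x y z := by
  intro n hn x y z
  rw [CosmoAux.cosmoC_eq D n n x y z (by omega),
      CosmoAux.cosmoC_eq D (n - 1) n x y z (by omega),
      CosmoAux.cosmoC_eq D (n - 2) n x y z (by omega),
      CosmoAux.cosmoC_two D x y z]
  have hA := CosmoAux.keyA_sum (CosmoAux.cc D) x y n hn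
  have hB := CosmoAux.keyB_sum (CosmoAux.cc D) x y z n hn
  have hx1 : (x : ℝ) ^ n = x ^ (n - 1) * x := by
    rw [← pow_succ]; congr 1; omega
  have hx2 : (x : ℝ) ^ n = x ^ (n - 2) * x ^ 2 := by
    rw [← pow_add]; congr 1; omega
  linear_combination -hA - hB + 2 * ((n : ℝ) - 2) * hx1 - ((n : ℝ) - 1) * hx2
end

section
/- Let D ≥ 3 be an integer and set c = D(D−1)/(D−2). For each integer n ≥ 1 define C_n : ℝ³ → ℝ by C_n(x,y,z) = x^n − Σ_{p=1}^{⌊n/2⌋} (2p−1)·binom(n,2p)·c^{2p}·x^{n−2p}·(4y)^p − Σ_{p=1}^{⌊(n−1)/2⌋} 16p·binom(n,2p+1)·c^{2p+1}·x^{n−2p−1}·(4y)^{p−1}·z. Then for every integer n ≥ 1 and all real s, g: C_n(s, g², g³) = Σ_{p=0}^n (−2^p·(p−1)·binom(n,p)·c^p) · g^p · s^{n−p}. -/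
theorem stmt_4 (D : ℕ) (hD : 3 ≤ D) :
    ∀ n : ℕ, 1 ≤ n → ∀ s g : ℝ,
      cosmoC D n s (g ^ 2) (g ^ 3)
        = ∑ p ∈ Finset.range (n + 1),
            (-(2 : ℝ) ^ p * ((p : ℝ) - 1) * (n.choose p : ℝ) *
              ((D : ℝ) * ((D : ℝ) - 1) / ((D : ℝ) - 2)) ^ p) * g ^ p * s ^ (n - p) := by
  intro n hn s g
  set c : ℝ := (D : ℝ) * ((D : ℝ) - 1) / ((D : ℝ) - 2) with hc
  set F : ℕ → ℝ := fun p =>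
    (-(2 : ℝ) ^ p * ((p : ℝ) - 1) * (n.choose p : ℝ) * c ^ p) * g ^ p * s ^ (n - p) with hF
  rw [← Finset.sum_filter_add_sum_filter_not (Finset.range (n + 1)) (fun p => p % 2 = 0) F]
  have himg1 : (Finset.range (n + 1)).filter (fun p => p % 2 = 0)
      = (Finset.Icc 0 (n / 2)).image (fun q => 2 * q) := by
    ext p
    simp only [Finset.mem_filter, Finset.mem_range, Finset.mem_image, Finset.mem_Icc]
    constructor
    · intro ⟨h1, h2⟩; exact ⟨p / 2, by omega, by omega⟩
    · rintro ⟨q, hq, rfl⟩; omega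
  have himg2 : (Finset.range (n + 1)).filter (fun p => ¬ p % 2 = 0)
      = (Finset.Icc 0 ((n - 1) / 2)).image (fun q => 2 * q + 1) := by
    ext p
    simp only [Finset.mem_filter, Finset.mem_range, Finset.mem_image, Finset.mem_Icc]
    constructor
    · intro ⟨h1, h2⟩; exact ⟨p / 2, by omega, by omega⟩
    · rintro ⟨q, hq, rfl⟩; omega
  rw [himg1, himg2,
    Finset.sum_image (fun a _ b _ h => by omega : ∀ a ∈ Finset.Icc 0 (n/2), ∀ b ∈ Finset.Icc 0 (n/2), 2*a = 2*b → a = b),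
    Finset.sum_image (fun a _ b _ h => by omega : ∀ a ∈ Finset.Icc 0 ((n-1)/2), ∀ b ∈ Finset.Icc 0 ((n-1)/2), 2*a+1 = 2*b+1 → a = b)]
  rw [show Finset.Icc 0 (n / 2) = insert 0 (Finset.Icc 1 (n / 2)) by ext; simp; omega]
  rw [show Finset.Icc 0 ((n - 1) / 2) = insert 0 (Finset.Icc 1 ((n - 1) / 2)) by ext; simp; omega]
  rw [Finset.sum_insert (by simp), Finset.sum_insert (by simp)]
  have h0 : F (2 * 0) = s ^ n := by simp [hF]
  have h1 : F (2 * 0 + 1) = 0 := by simp [hF]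
  have heven : ∀ q ∈ Finset.Icc 1 (n / 2), F (2 * q)
      = -((2 * (q : ℝ) - 1) * (n.choose (2 * q) : ℝ) * c ^ (2 * q) * s ^ (n - 2 * q)
          * (4 * g ^ 2) ^ q) := by
    intro q _
    simp only [hF]
    rw [show (4 : ℝ) * g ^ 2 = 2 ^ 2 * g ^ 2 by norm_num, mul_pow, ← pow_mul, ← pow_mul]
    push_cast
    ring
  have hodd : ∀ q ∈ Finset.Icc 1 ((n - 1) / 2), F (2 * q + 1)
      = -(16 * (q : ℝ) * (n.choose (2 * q + 1) : ℝ) * c ^ (2 * q + 1) * s ^ (n - 2 * q - 1)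
          * (4 * g ^ 2) ^ (q - 1) * g ^ 3) := by
    intro q hq
    simp only [Finset.mem_Icc] at hq
    obtain ⟨k, rfl⟩ : ∃ k, q = k + 1 := ⟨q - 1, by omega⟩
    simp only [hF, Nat.add_sub_cancel]
    rw [show n - 2 * (k + 1) - 1 = n - (2 * (k + 1) + 1) by omega]
    rw [show (4 : ℝ) * g ^ 2 = 2 ^ 2 * g ^ 2 by norm_num, mul_pow, ← pow_mul, ← pow_mul]
    rw [show 2 * (k + 1) + 1 = 2 * k + 3 by ring, pow_add g (2 * k) 3,
      pow_add (2 : ℝ) (2 * k) 3]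
    push_cast
    ring
  rw [Finset.sum_congr rfl heven, Finset.sum_congr rfl hodd, h0, h1]
  simp only [cosmoC, Finset.sum_neg_distrib]
  ring
end

section
/- Let n ≥ 2 and D ≥ 3 be integers, let a > 0 and F > 0 be reals, let β_0, …, β_n, Γ₀, Σ₀ be reals, and set α_p = 2(D−1)(n−p)·β_p − ((D−2)/D)·(p+1)·β_{p+1} for 0 ≤ p ≤ n−1. Define f : ℝ → ℝ by f(x) = Σ_{p=0}^n β_p · (Γ₀ − (D−2)·x/(D·a·F))^p · (Σ₀ + 2(D−1)·x/(a·F))^{n−p}. Then for every x ∈ ℝ the second derivative of f satisfies f''(x) = (1/(a²F²)) · Σ_{p=0}^{n−2} ( 2(D−1)(n−1−p)·α_p − ((D−2)/D)·(p+1)·α_{p+1} ) · (Γ₀ − (D−2)·x/(D·a·F))^p · (Σ₀ + 2(D−1)·x/(a·F))^{n−2−p}. -/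
lemma key_deriv (c1 c2 G₀ S₀ : ℝ) (γ : ℕ → ℝ) (m : ℕ) (x : ℝ) :
    HasDerivAt (fun x => ∑ p ∈ Finset.range (m + 1),
        γ p * (G₀ - c1 * x) ^ p * (S₀ + c2 * x) ^ (m - p))
      (∑ p ∈ Finset.range m,
        (c2 * ((m : ℝ) - (p : ℝ)) * γ p - c1 * ((p : ℝ) + 1) * γ (p + 1)) *
          (G₀ - c1 * x) ^ p * (S₀ + c2 * x) ^ (m - 1 - p)) x := by
  have hg : HasDerivAt (fun y : ℝ => G₀ - c1 * y) (-c1) x := by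
    simpa using (hasDerivAt_const x G₀).fun_sub ((hasDerivAt_id x).const_mul c1)
  have hh : HasDerivAt (fun y : ℝ => S₀ + c2 * y) c2 x := by
    simpa using (hasDerivAt_const x S₀).fun_add ((hasDerivAt_id x).const_mul c2)
  have H := HasDerivAt.fun_sum (u := Finset.range (m + 1))
    (fun p _ => (((hg.fun_pow p).const_mul (γ p)).fun_mul (hh.fun_pow (m - p))))
  convert H using 1
  case e'_4 => rfl
  case e'_5 => rfl
  rw [Finset.sum_add_distrib, Finset.sum_range_succ', Finset.sum_range_succ]
  simp only [Nat.cast_zero, Nat.sub_self, Nat.cast_zero, zero_mul, mul_zero,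
    Nat.add_sub_cancel, add_zero]
  rw [← Finset.sum_add_distrib]
  refine Finset.sum_congr rfl fun p hp => ?_
  have hpm : p < m := Finset.mem_range.mp hp
  rw [show m - (p + 1) = m - 1 - p by omega, show m - p - 1 = m - 1 - p by omega,
    Nat.cast_sub hpm.le]
  push_cast
  ring

theorem stmt_5 (n D : ℕ) (hn : 2 ≤ n) (hD : 3 ≤ D)
    (a F : ℝ) (ha : 0 < a) (hF : 0 < F)
    (β : ℕ → ℝ) (G₀ S₀ : ℝ) :
    let α : ℕ → ℝ := fun p =>
      2 * ((D : ℝ) - 1) * ((n : ℝ) - (p : ℝ)) * β p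
        - ((D : ℝ) - 2) / (D : ℝ) * ((p : ℝ) + 1) * β (p + 1)
    let f : ℝ → ℝ := fun x => ∑ p ∈ Finset.range (n + 1),
      β p * (G₀ - ((D : ℝ) - 2) * x / ((D : ℝ) * a * F)) ^ p *
        (S₀ + 2 * ((D : ℝ) - 1) * x / (a * F)) ^ (n - p)
    ∀ x : ℝ, deriv (deriv f) x = 1 / (a ^ 2 * F ^ 2) *
      ∑ p ∈ Finset.range (n - 1),
        (2 * ((D : ℝ) - 1) * ((n : ℝ) - 1 - (p : ℝ)) * α p
          - ((D : ℝ) - 2) / (D : ℝ) * ((p : ℝ) + 1) * α (p + 1)) *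
        (G₀ - ((D : ℝ) - 2) * x / ((D : ℝ) * a * F)) ^ p *
        (S₀ + 2 * ((D : ℝ) - 1) * x / (a * F)) ^ (n - 2 - p) := by
  intro α f x
  set c1 : ℝ := ((D : ℝ) - 2) / ((D : ℝ) * a * F) with hc1
  set c2 : ℝ := 2 * ((D : ℝ) - 1) / (a * F) with hc2
  set δ : ℕ → ℝ := fun p =>
    c2 * ((n : ℝ) - (p : ℝ)) * β p - c1 * ((p : ℝ) + 1) * β (p + 1) with hδ
  have hf : f = fun x => ∑ p ∈ Finset.range (n + 1),
      β p * (G₀ - c1 * x) ^ p * (S₀ + c2 * x) ^ (n - p) := by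
    funext y
    refine Finset.sum_congr rfl fun p _ => ?_
    rw [hc1, hc2]
    ring
  have h1 : deriv f = fun y => ∑ p ∈ Finset.range n,
      δ p * (G₀ - c1 * y) ^ p * (S₀ + c2 * y) ^ (n - 1 - p) := by
    funext y
    rw [hf]
    exact (key_deriv c1 c2 G₀ S₀ β n y).deriv
  rw [h1]
  have h2 := (key_deriv c1 c2 G₀ S₀ δ (n - 1) x).deriv
  rw [show n - 1 + 1 = n by omega] at h2
  rw [h2, Finset.mul_sum]
  refine Finset.sum_congr rfl fun p hp => ?_
  have hpn : p < n - 1 := Finset.mem_range.mp hp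
  rw [show n - 1 - 1 - p = n - 2 - p by omega, Nat.cast_sub (by omega : 1 ≤ n)]
  have hb1 : G₀ - ((D : ℝ) - 2) * x / ((D : ℝ) * a * F) = G₀ - c1 * x := by
    rw [hc1]; ring
  have hb2 : S₀ + 2 * ((D : ℝ) - 1) * x / (a * F) = S₀ + c2 * x := by
    rw [hc2]; ring
  rw [hb1, hb2]
  simp only [hδ, α, hc1, hc2]
  push_cast
  ring
end

section
/- Let n ≥ 2 and D ≥ 3 be integers, let a > 0 and F > 0 be fixed reals, let β_0, …, β_n be reals, and set α_p = 2(D−1)(n−p)·β_p − ((D−2)/D)·(p+1)·β_{p+1} for 0 ≤ p ≤ n−1. For Γ₀, Σ₀ ∈ ℝ define f_{Γ₀,Σ₀} : ℝ → ℝ by f_{Γ₀,Σ₀}(x) = Σ_{p=0}^n β_p · (Γ₀ − (D−2)·x/(D·a·F))^p · (Σ₀ + 2(D−1)·x/(a·F))^{n−p}. Then the second derivative f''_{Γ₀,Σ₀}(x) vanishes for all x ∈ ℝ and all Γ₀, Σ₀ ∈ ℝ if and only if 2(D−1)(n−1−p)·α_p = ((D−2)/D)·(p+1)·α_{p+1}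 for every integer p with 0 ≤ p ≤ n−2. -/
open Finset

private lemma coeff_zero_of_sum_eq_zero (m : ℕ) (g : ℕ → ℝ)
    (h : ∀ t : ℝ, ∑ p ∈ range m, g p * t ^ p = 0) :
    ∀ p ∈ range m, g p = 0 := by
  intro p hp
  have hpoly : (∑ q ∈ range m, Polynomial.C (g q) * Polynomial.X ^ q) = (0 : Polynomial ℝ) := by
    apply Polynomial.funext
    intro t
    simpa [Polynomial.eval_finset_sum] using h t
  have hc := congrArg (fun P : Polynomial ℝ => P.coeff p) hpoly
  simp only [Polynomial.finset_sum_coeff, Polynomial.coeff_C_mul, Polynomial.coeff_X_pow,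
    Polynomial.coeff_zero, mul_ite, mul_one, mul_zero, Finset.sum_ite_eq, hp, if_true] at hc
  exact hc

private lemma hasDerivAt_sum_pow (m : ℕ) (κ : ℕ → ℝ) (c d G S : ℝ) (x : ℝ) :
    HasDerivAt (fun x : ℝ => ∑ p ∈ range (m + 1),
        κ p * (G - c * x) ^ p * (S + d * x) ^ (m - p))
      (∑ p ∈ range (m + 1),
        ((κ p * ((p : ℝ) * (G - c * x) ^ (p - 1) * (-c))) * (S + d * x) ^ (m - p)
          + (κ p * (G - c * x) ^ p) * ((↑(m - p) : ℝ) * (S + d * x) ^ (m - p - 1) * d))) x := by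
  apply HasDerivAt.fun_sum
  intro p _
  have hu : HasDerivAt (fun x : ℝ => G - c * x) (-c) x := by
    simpa using (hasDerivAt_const x G).fun_sub ((hasDerivAt_id x).const_mul c)
  have hv : HasDerivAt (fun x : ℝ => S + d * x) d x := by
    simpa using (hasDerivAt_const x S).fun_add ((hasDerivAt_id x).const_mul d)
  exact (((hu.pow p).const_mul (κ p)).mul (hv.pow (m - p)))

private lemma reindex_sum (m : ℕ) (hm : 1 ≤ m) (κ : ℕ → ℝ) (c d u v : ℝ) :
    (∑ p ∈ range (m + 1),
        ((κ p * ((p : ℝ) * u ^ (p - 1) * (-c))) * v ^ (m - p)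
          + (κ p * u ^ p) * ((↑(m - p) : ℝ) * v ^ (m - p - 1) * d)))
    = ∑ p ∈ range ((m - 1) + 1),
        (d * ((m : ℝ) - (p : ℝ)) * κ p - c * ((p : ℝ) + 1) * κ (p + 1)) * u ^ p
          * v ^ ((m - 1) - p) := by
  rw [Finset.sum_add_distrib, Finset.sum_range_succ' (fun p => (κ p * ((p : ℝ) * u ^ (p - 1) * (-c))) * v ^ (m - p)) m,
    Finset.sum_range_succ (fun p => (κ p * u ^ p) * ((↑(m - p) : ℝ) * v ^ (m - p - 1) * d)) m]
  rw [show (m - 1) + 1 = m by omega]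
  simp only [Nat.cast_zero, Nat.sub_self, zero_mul, mul_zero, add_zero]
  rw [← Finset.sum_add_distrib]
  apply Finset.sum_congr rfl
  intro p hp
  rw [Finset.mem_range] at hp
  have h1 : m - (p + 1) = m - 1 - p := by omega
  have h2 : m - p - 1 = m - 1 - p := by omega
  have h3 : p + 1 - 1 = p := by omega
  have h4 : ((m - p : ℕ) : ℝ) = (m : ℝ) - (p : ℝ) := by
    rw [Nat.cast_sub hp.le]
  rw [h1, h2, h3, h4]
  push_cast
  ring

private lemma deriv_sum_eq (m : ℕ) (hm : 1 ≤ m) (κ : ℕ → ℝ) (c d G S : ℝ) :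
    deriv (fun x : ℝ => ∑ p ∈ range (m + 1), κ p * (G - c * x) ^ p * (S + d * x) ^ (m - p))
      = fun x : ℝ => ∑ p ∈ range ((m - 1) + 1),
          (d * ((m : ℝ) - (p : ℝ)) * κ p - c * ((p : ℝ) + 1) * κ (p + 1))
            * (G - c * x) ^ p * (S + d * x) ^ ((m - 1) - p) := by
  funext x
  rw [(hasDerivAt_sum_pow m κ c d G S x).deriv]
  exact reindex_sum m hm κ c d _ _

theorem stmt_6 (n D : ℕ) (hn : 2 ≤ n) (hD : 3 ≤ D)
    (a F : ℝ) (ha : 0 < a) (hF : 0 < F) (β : ℕ → ℝ) :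
    let α : ℕ → ℝ := fun p =>
      2 * ((D : ℝ) - 1) * ((n : ℝ) - (p : ℝ)) * β p
        - ((D : ℝ) - 2) / (D : ℝ) * ((p : ℝ) + 1) * β (p + 1)
    let f : ℝ → ℝ → ℝ → ℝ := fun G₀ S₀ x => ∑ p ∈ Finset.range (n + 1),
      β p * (G₀ - ((D : ℝ) - 2) * x / ((D : ℝ) * a * F)) ^ p *
        (S₀ + 2 * ((D : ℝ) - 1) * x / (a * F)) ^ (n - p)
    (∀ G₀ S₀ x : ℝ, deriv (deriv (f G₀ S₀)) x = 0)
      ↔ (∀ p : ℕ, p + 2 ≤ n →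
          2 * ((D : ℝ) - 1) * ((n : ℝ) - 1 - (p : ℝ)) * α p
            = ((D : ℝ) - 2) / (D : ℝ) * ((p : ℝ) + 1) * α (p + 1)) := by
  intro α f
  have hD0 : (D : ℝ) ≠ 0 := by positivity
  have ha' : a ≠ 0 := ha.ne'
  have hF' : F ≠ 0 := hF.ne'
  set c : ℝ := ((D : ℝ) - 2) / ((D : ℝ) * a * F) with hc
  set dd : ℝ := 2 * ((D : ℝ) - 1) / (a * F) with hdd
  set κ : ℕ → ℝ := fun p =>
    dd * ((n : ℝ) - (p : ℝ)) * β p - c * ((p : ℝ) + 1) * β (p + 1) with hκ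
  set γ : ℕ → ℝ := fun p =>
    dd * (((n - 1 : ℕ) : ℝ) - (p : ℝ)) * κ p - c * ((p : ℝ) + 1) * κ (p + 1) with hγdef
  have hfeq : ∀ G S : ℝ, f G S
      = fun x => ∑ p ∈ range (n + 1), β p * (G - c * x) ^ p * (S + dd * x) ^ (n - p) := by
    intro G S
    funext x
    unfold f
    apply Finset.sum_congr rfl
    intro p _
    have e1 : G - ((D : ℝ) - 2) * x / ((D : ℝ) * a * F) = G - c * x := by
      rw [hc]; ring
    have e2 : S + 2 * ((D : ℝ) - 1) * x / (a * F) = S + dd * x := by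
      rw [hdd]; ring
    rw [e1, e2]
  have h1 : ∀ G S : ℝ, deriv (f G S)
      = fun x => ∑ p ∈ range ((n - 1) + 1), κ p * (G - c * x) ^ p * (S + dd * x) ^ ((n - 1) - p) := by
    intro G S
    rw [hfeq G S]
    exact deriv_sum_eq n (by omega) β c dd G S
  have h2 : ∀ G S : ℝ, deriv (deriv (f G S))
      = fun x => ∑ p ∈ range ((n - 1 - 1) + 1),
          γ p * (G - c * x) ^ p * (S + dd * x) ^ ((n - 1 - 1) - p) := by
    intro G S
    rw [h1 G S]
    exact deriv_sum_eq (n - 1) (by omega) κ c dd G S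
  have haF2 : (a * F) ^ 2 ≠ 0 := by positivity
  have hcast : ((n - 1 : ℕ) : ℝ) = (n : ℝ) - 1 := by
    rw [Nat.cast_sub (by omega)]; norm_num
  have hγα : ∀ p : ℕ, γ p * (a * F) ^ 2
      = 2 * ((D : ℝ) - 1) * ((n : ℝ) - 1 - (p : ℝ)) * α p
        - ((D : ℝ) - 2) / (D : ℝ) * ((p : ℝ) + 1) * α (p + 1) := by
    intro p
    rw [hγdef]
    unfold α
    simp only [hκ, hc, hdd, hcast]
    push_cast
    field_simp
  constructor
  · intro H p hp
    have hmem : p ∈ range ((n - 1 - 1) + 1) := by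
      rw [Finset.mem_range]; omega
    have hz : ∀ t : ℝ, ∑ q ∈ range ((n - 1 - 1) + 1), γ q * t ^ q = 0 := by
      intro t
      have := H t 1 0
      rw [h2 t 1] at this
      simpa using this
    have := coeff_zero_of_sum_eq_zero _ γ hz p hmem
    have h0 := hγα p
    rw [this, zero_mul] at h0
    linarith
  · intro H G S x
    rw [h2 G S]
    apply Finset.sum_eq_zero
    intro p hp
    rw [Finset.mem_range] at hp
    have hple : p + 2 ≤ n := by omega
    have hγ0 : γ p = 0 := by
      have h0 := hγα p
      rw [H p hple, sub_self] at h0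
      exact (mul_eq_zero.mp h0).resolve_right haF2
    rw [hγ0, zero_mul, zero_mul]
end

section
/- Let n ≥ 1 and D ≥ 3 be integers, k a real number, and set β_p = −2^p·(p−1)·binom(n,p)·(D(D−1)/(D−2))^p for 0 ≤ p ≤ n. For a > 0, F > 0 and v, w, u ∈ ℝ define Γ(a,v,w,F,u) = (D−2)·(2kF² + 2Fv² + a·v·u − 2a·w·F)/(2a²F²D), Σ(a,v,w,F,u) = (D−1)·((D−2)kF² + (D−2)Fv² − a·v·u + 2a·w·F)/(a²F²), and L̂(a,v,w,F,u) = √F · a^{D−1} · Σ_{p=0}^n β_p·Γ(a,v,w,F,u)^p·Σ(a,v,w,F,u)^{n−p}. Let a : ℝ → ℝ be three times differentiable with a(t) > 0 for all t. Then for every t: (∂L̂/∂F)(a(t),ȧ(t),ä(t),1,0) − (d/dt)[ s ↦ (∂L̂/∂u)(a(s),ȧ(s),ä(s),1,0) ](t) = (a(t)^{D−1}/(2D))·(D−2n)·(D(D−1)(k + ȧ(t)²)/a(t)²)^n, where ∂L̂/∂F and ∂L̂/∂u denote the partial derivatives of L̂ in its fourth and fifth arguments. -/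
set_option maxHeartbeats 1000000 in
private lemma sum_aux (n : ℕ) (y s : ℝ) :
    ∑ p ∈ Finset.range (n + 1), ((p : ℝ) * (n.choose p : ℝ)) * y ^ p * s ^ (n - p)
      = n * y * (y + s) ^ (n - 1) := by
  cases n with
  | zero => simp
  | succ m =>
    rw [Finset.sum_range_succ']
    simp only [Nat.cast_zero, zero_mul, pow_zero, add_zero, Nat.cast_succ]
    have key : ∀ i ∈ Finset.range (m + 1),
        (((i : ℝ) + 1) * ((m+1).choose (i+1) : ℝ)) * y ^ (i+1) * s ^ (m + 1 - (i+1))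
        = ((m : ℝ) + 1) * y * ((m.choose i : ℝ) * y ^ i * s ^ (m - i)) := by
      intro i hi
      have h : (m + 1) * m.choose i = (m+1).choose (i+1) * (i+1) := Nat.add_one_mul_choose_eq m i
      have h' : ((m : ℝ) + 1) * (m.choose i : ℝ) = ((m+1).choose (i+1) : ℝ) * ((i:ℝ)+1) := by
        exact_mod_cast congrArg (Nat.cast : ℕ → ℝ) h
      have : m + 1 - (i + 1) = m - i := by omega
      rw [this, pow_succ]
      linear_combination -(y ^ i * y * s ^ (m - i)) * h'
    rw [Finset.sum_congr rfl key, ← Finset.mul_sum]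
    have : ∑ i ∈ Finset.range (m + 1), ((m.choose i : ℝ) * y ^ i * s ^ (m - i))
        = (y + s) ^ m := by
      rw [add_pow]
      exact Finset.sum_congr rfl fun i _ => by ring
    rw [this]
    simp

set_option maxHeartbeats 1000000 in
private lemma closed_form (n D : ℕ) (k d x v w F u : ℝ) (hd0 : d ≠ 0) (hd2 : d - 2 ≠ 0)
    (hx : x ≠ 0) (hF : F ≠ 0) :
    Real.sqrt F * x ^ (D - 1) *
      ∑ p ∈ Finset.range (n + 1),
        (-(2:ℝ) ^ p * ((p : ℝ) - 1) * (n.choose p : ℝ) * (d * (d - 1) / (d - 2)) ^ p) *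
          ((d - 2) * (2 * k * F ^ 2 + 2 * F * v ^ 2 + x * v * u - 2 * x * w * F) /
            (2 * x ^ 2 * F ^ 2 * d)) ^ p *
          ((d - 1) * ((d - 2) * k * F ^ 2 + (d - 2) * F * v ^ 2 - x * v * u + 2 * x * w * F) /
            (x ^ 2 * F ^ 2)) ^ (n - p)
    = Real.sqrt F * x ^ (D - 1) *
        ((d * (d - 1) * (k * F + v ^ 2) / (x ^ 2 * F)) ^ n
          - n * ((d - 1) * (2 * k * F ^ 2 + 2 * F * v ^ 2 + x * v * u - 2 * x * w * F) /
              (x ^ 2 * F ^ 2)) *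
            (d * (d - 1) * (k * F + v ^ 2) / (x ^ 2 * F)) ^ (n - 1)) := by
  set Y : ℝ := (d - 1) * (2 * k * F ^ 2 + 2 * F * v ^ 2 + x * v * u - 2 * x * w * F) /
      (x ^ 2 * F ^ 2) with hYdef
  set Sv : ℝ := (d - 1) * ((d - 2) * k * F ^ 2 + (d - 2) * F * v ^ 2 - x * v * u + 2 * x * w * F) /
      (x ^ 2 * F ^ 2) with hSdef
  have hX : Y + Sv = d * (d - 1) * (k * F + v ^ 2) / (x ^ 2 * F) := by
    rw [hYdef, hSdef]; field_simp; ring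
  have hG : 2 * (d * (d - 1) / (d - 2)) *
      ((d - 2) * (2 * k * F ^ 2 + 2 * F * v ^ 2 + x * v * u - 2 * x * w * F) /
        (2 * x ^ 2 * F ^ 2 * d)) = Y := by
    rw [hYdef]; field_simp
  have hterm : ∀ p ∈ Finset.range (n + 1),
      (-(2:ℝ) ^ p * ((p : ℝ) - 1) * (n.choose p : ℝ) * (d * (d - 1) / (d - 2)) ^ p) *
        ((d - 2) * (2 * k * F ^ 2 + 2 * F * v ^ 2 + x * v * u - 2 * x * w * F) /
          (2 * x ^ 2 * F ^ 2 * d)) ^ p * Sv ^ (n - p)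
      = ((n.choose p : ℝ)) * Y ^ p * Sv ^ (n - p)
        - ((p : ℝ) * (n.choose p : ℝ)) * Y ^ p * Sv ^ (n - p) := by
    intro p _
    rw [← hG, mul_pow, mul_pow]
    ring
  rw [Finset.sum_congr rfl hterm, Finset.sum_sub_distrib, sum_aux]
  have hbin : ∑ p ∈ Finset.range (n + 1), ((n.choose p : ℝ)) * Y ^ p * Sv ^ (n - p)
      = (Y + Sv) ^ n := by
    rw [add_pow]
    exact Finset.sum_congr rfl fun i _ => by ring
  rw [hbin, hX]

set_option maxHeartbeats 1000000 in
theorem stmt_11 (n D : ℕ) (hn : 1 ≤ n) (hD : 3 ≤ D) (k : ℝ)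
    (a : ℝ → ℝ) (ha : ∀ t, 0 < a t)
    (h1 : Differentiable ℝ a) (h2 : Differentiable ℝ (deriv a))
    (h3 : Differentiable ℝ (deriv (deriv a))) :
    let β : ℕ → ℝ := fun p =>
      -(2 : ℝ) ^ p * ((p : ℝ) - 1) * (n.choose p : ℝ) *
        ((D : ℝ) * ((D : ℝ) - 1) / ((D : ℝ) - 2)) ^ p
    let G : ℝ → ℝ → ℝ → ℝ → ℝ → ℝ := fun x v w F u =>
      ((D : ℝ) - 2) * (2 * k * F ^ 2 + 2 * F * v ^ 2 + x * v * u - 2 * x * w * F) /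
        (2 * x ^ 2 * F ^ 2 * (D : ℝ))
    let S : ℝ → ℝ → ℝ → ℝ → ℝ → ℝ := fun x v w F u =>
      ((D : ℝ) - 1) * (((D : ℝ) - 2) * k * F ^ 2 + ((D : ℝ) - 2) * F * v ^ 2
          - x * v * u + 2 * x * w * F) / (x ^ 2 * F ^ 2)
    let Lhat : ℝ → ℝ → ℝ → ℝ → ℝ → ℝ := fun x v w F u =>
      Real.sqrt F * x ^ (D - 1) *
        ∑ p ∈ Finset.range (n + 1), β p * G x v w F u ^ p * S x v w F u ^ (n - p)
    ∀ t : ℝ,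
      deriv (fun F' => Lhat (a t) (deriv a t) (deriv (deriv a) t) F' 0) 1
        - deriv (fun s => deriv (fun u' => Lhat (a s) (deriv a s) (deriv (deriv a) s) 1 u') 0) t
      = a t ^ (D - 1) / (2 * (D : ℝ)) * (((D : ℝ) - 2 * (n : ℝ)) *
          ((D : ℝ) * ((D : ℝ) - 1) * (k + (deriv a t) ^ 2) / (a t) ^ 2) ^ n) := by
  intro β G S Lhat t
  have hd0 : (D : ℝ) ≠ 0 := by positivity
  have hd2 : (D : ℝ) - 2 ≠ 0 := by
    have : (3:ℝ) ≤ (D:ℝ) := by exact_mod_cast hD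
    linarith
  have hax : ∀ s, a s ≠ 0 := fun s => (ha s).ne'
  simp only [β, G, S, Lhat]
  -- Step 1 : the F-derivative
  have heq1 : (fun F' : ℝ =>
      Real.sqrt F' * a t ^ (D - 1) *
        ∑ p ∈ Finset.range (n + 1),
          -(2:ℝ) ^ p * ((p:ℝ) - 1) * (n.choose p : ℝ) * ((D:ℝ) * ((D:ℝ) - 1) / ((D:ℝ) - 2)) ^ p *
            (((D:ℝ) - 2) * (2 * k * F' ^ 2 + 2 * F' * deriv a t ^ 2 + a t * deriv a t * 0
                - 2 * a t * deriv (deriv a) t * F') / (2 * a t ^ 2 * F' ^ 2 * (D:ℝ))) ^ p *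
            (((D:ℝ) - 1) * (((D:ℝ) - 2) * k * F' ^ 2 + ((D:ℝ) - 2) * F' * deriv a t ^ 2
                - a t * deriv a t * 0 + 2 * a t * deriv (deriv a) t * F') /
              (a t ^ 2 * F' ^ 2)) ^ (n - p))
      =ᶠ[nhds (1:ℝ)] (fun F' : ℝ =>
      Real.sqrt F' * a t ^ (D - 1) *
        (((D:ℝ) * ((D:ℝ) - 1) * (k * F' + deriv a t ^ 2) / (a t ^ 2 * F')) ^ n
          - (n:ℝ) * (((D:ℝ) - 1) * (2 * k * F' ^ 2 + 2 * F' * deriv a t ^ 2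
                + a t * deriv a t * 0 - 2 * a t * deriv (deriv a) t * F') /
              (a t ^ 2 * F' ^ 2)) *
            ((D:ℝ) * ((D:ℝ) - 1) * (k * F' + deriv a t ^ 2) / (a t ^ 2 * F')) ^ (n - 1))) := by
    filter_upwards [eventually_ne_nhds one_ne_zero] with F' hF'
    exact closed_form n D k (D:ℝ) (a t) (deriv a t) (deriv (deriv a) t) F' 0 hd0 hd2 (hax t) hF'
  rw [heq1.deriv_eq]
  have hsq : HasDerivAt (fun F' : ℝ => Real.sqrt F' * a t ^ (D - 1))
      (1 / (2 * Real.sqrt 1) * a t ^ (D - 1)) 1 :=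
    (Real.hasDerivAt_sqrt one_ne_zero).mul_const _
  have hXnum := (((hasDerivAt_id' (x := (1:ℝ))).const_mul k).add_const (deriv a t ^ 2)).const_mul
      ((D:ℝ) * ((D:ℝ) - 1))
  have hXden := (hasDerivAt_id' (x := (1:ℝ))).const_mul (a t ^ 2)
  have hX1 := hXnum.div hXden (by simp [hax t])
  have hY1a := ((hasDerivAt_pow 2 (1:ℝ)).const_mul (2*k)).add
      (((hasDerivAt_id' (x := (1:ℝ))).const_mul 2).mul_const (deriv a t ^ 2))
  have hY1b := (hY1a.add_const (a t * deriv a t * 0)).sub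
      ((hasDerivAt_id' (x := (1:ℝ))).const_mul (2 * a t * deriv (deriv a) t))
  have hY1num := hY1b.const_mul ((D:ℝ) - 1)
  have hY1den := (hasDerivAt_pow 2 (1:ℝ)).const_mul (a t ^ 2)
  have hY1 := hY1num.div hY1den (by simp [hax t])
  have htot := hsq.mul ((hX1.pow n).sub ((hY1.const_mul (n:ℝ)).mul (hX1.pow (n-1))))
  erw [htot.deriv]
  have key2 : (fun s => deriv
      (fun u' =>
        Real.sqrt 1 * a s ^ (D - 1) *
          ∑ p ∈ Finset.range (n + 1),
            -(2:ℝ) ^ p * ((p:ℝ) - 1) * (n.choose p : ℝ) * ((D:ℝ) * ((D:ℝ) - 1) / ((D:ℝ) - 2)) ^ p *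
                (((D:ℝ) - 2) * (2 * k * 1 ^ 2 + 2 * 1 * deriv a s ^ 2 + a s * deriv a s * u' -
                      2 * a s * deriv (deriv a) s * 1) /
                    (2 * a s ^ 2 * 1 ^ 2 * (D:ℝ))) ^ p *
              (((D:ℝ) - 1) * (((D:ℝ) - 2) * k * 1 ^ 2 + ((D:ℝ) - 2) * 1 * deriv a s ^ 2 -
                    a s * deriv a s * u' + 2 * a s * deriv (deriv a) s * 1) /
                  (a s ^ 2 * 1 ^ 2)) ^ (n - p)) 0)
      = (fun s => (-(n:ℝ) * ((D:ℝ) - 1)) * (a s ^ (D - 1) * (a s * deriv a s) / (a s) ^ 2) *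
          ((D:ℝ) * ((D:ℝ) - 1) * (k + deriv a s ^ 2) / (a s) ^ 2) ^ (n - 1)) := by
    funext s
    have hcf : (fun u' : ℝ =>
        Real.sqrt 1 * a s ^ (D - 1) *
          ∑ p ∈ Finset.range (n + 1),
            -(2:ℝ) ^ p * ((p:ℝ) - 1) * (n.choose p : ℝ) * ((D:ℝ) * ((D:ℝ) - 1) / ((D:ℝ) - 2)) ^ p *
                (((D:ℝ) - 2) * (2 * k * 1 ^ 2 + 2 * 1 * deriv a s ^ 2 + a s * deriv a s * u' -
                      2 * a s * deriv (deriv a) s * 1) /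
                    (2 * a s ^ 2 * 1 ^ 2 * (D:ℝ))) ^ p *
              (((D:ℝ) - 1) * (((D:ℝ) - 2) * k * 1 ^ 2 + ((D:ℝ) - 2) * 1 * deriv a s ^ 2 -
                    a s * deriv a s * u' + 2 * a s * deriv (deriv a) s * 1) /
                  (a s ^ 2 * 1 ^ 2)) ^ (n - p))
        = (fun u' : ℝ =>
        Real.sqrt 1 * a s ^ (D - 1) *
          (((D:ℝ) * ((D:ℝ) - 1) * (k * 1 + deriv a s ^ 2) / (a s ^ 2 * 1)) ^ n
            - (n:ℝ) * (((D:ℝ) - 1) * (2 * k * 1 ^ 2 + 2 * 1 * deriv a s ^ 2 + a s * deriv a s * u'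
                  - 2 * a s * deriv (deriv a) s * 1) / (a s ^ 2 * 1 ^ 2)) *
              ((D:ℝ) * ((D:ℝ) - 1) * (k * 1 + deriv a s ^ 2) / (a s ^ 2 * 1)) ^ (n - 1))) :=
      funext fun u' => closed_form n D k (D:ℝ) (a s) (deriv a s) (deriv (deriv a) s) 1 u'
        hd0 hd2 (hax s) one_ne_zero
    rw [hcf]
    have hYu := ((((hasDerivAt_id' (x := (0:ℝ))).const_mul (a s * deriv a s)).const_add
        (2 * k * 1 ^ 2 + 2 * 1 * deriv a s ^ 2)).sub_const
        (2 * a s * deriv (deriv a) s * 1)).const_mul ((D:ℝ) - 1)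
    have hYu2 := hYu.div_const (a s ^ 2 * 1 ^ 2)
    have hdu := ((hasDerivAt_const (0:ℝ)
        (((D:ℝ) * ((D:ℝ) - 1) * (k * 1 + deriv a s ^ 2) / (a s ^ 2 * 1)) ^ n)).sub
        ((hYu2.const_mul (n:ℝ)).mul_const
          (((D:ℝ) * ((D:ℝ) - 1) * (k * 1 + deriv a s ^ 2) / (a s ^ 2 * 1)) ^ (n - 1)))).const_mul
        (Real.sqrt 1 * a s ^ (D - 1))
    erw [hdu.deriv]
    rw [show (D:ℝ) * ((D:ℝ) - 1) * (k * 1 + deriv a s ^ 2) / (a s ^ 2 * 1)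
        = (D:ℝ) * ((D:ℝ) - 1) * (k + deriv a s ^ 2) / (a s) ^ 2 by norm_num]
    rw [Real.sqrt_one]
    field_simp
    ring
  rw [key2]
  have ha' : HasDerivAt a (deriv a t) t := (h1 t).hasDerivAt
  have hv' : HasDerivAt (deriv a) (deriv (deriv a) t) t := (h2 t).hasDerivAt
  have hP := ((ha'.pow (D-1)).mul (ha'.mul hv')).div (ha'.pow 2)
      (pow_ne_zero 2 (hax t))
  have hN := ((hv'.pow 2).const_add k).const_mul ((D:ℝ) * ((D:ℝ) - 1))
  have hR := (hN.div (ha'.pow 2) (pow_ne_zero 2 (hax t))).pow (n-1)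
  have hQd := (hP.const_mul (-(n:ℝ) * ((D:ℝ) - 1))).mul hR
  erw [hQd.deriv]
  simp only [Pi.mul_apply, Pi.div_apply, Pi.pow_apply, Pi.add_apply, Pi.sub_apply]
  clear heq1 hsq hXnum hXden hX1 hY1a hY1b hY1num hY1den hY1 htot key2 ha' hv' hP hN hR hQd
  clear_value β G S Lhat
  clear β G S Lhat h1 h2 h3 ha
  have hA0 : a t ≠ 0 := hax t
  clear hax
  set A := a t with hA
  set V := deriv a t with hV
  set W := deriv (deriv a) t with hW
  clear_value A V W
  clear hA hV hW
  obtain ⟨e, rfl⟩ := Nat.exists_eq_add_of_le hD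
  obtain ⟨m, rfl⟩ := Nat.exists_eq_add_of_le hn
  have hd0' : (3:ℝ) + (e:ℝ) ≠ 0 := by positivity
  clear hd0 hd2 hD hn
  rcases m with _ | q
  · norm_num [Real.sqrt_one]
    push_cast
    field_simp
    ring
  · norm_num [Real.sqrt_one]
    simp only [show 3 + e - 1 = e + 2 by omega, show 3 + e - 1 - 1 = e + 1 by omega,
      show 1 + (q + 1) = q + 2 by omega, show q + 2 - 1 = q + 1 by omega,
      show q + 2 - 1 - 1 = q by omega, show q + 1 + 1 = q + 2 by omega]
    push_cast
    simp only [div_pow]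
    field_simp
    ring
end

section
/- Let n ≥ 1 and D ≥ 3 be integers, k a real number, and set β_p = −2^p·(p−1)·binom(n,p)·(D(D−1)/(D−2))^p for 0 ≤ p ≤ n. For α > 0 and v, w ∈ ℝ define Γ₁(α,v,w) = (D−2)·(k + v² − α·w)/(D·α²), Σ₁(α,v,w) = (D−1)·((D−2)(k + v²) + 2α·w)/α², and L(α,v,w) = α^{D−1}·Σ_{p=0}^n β_p·Γ₁(α,v,w)^p·Σ₁(α,v,w)^{n−p}. Let a : ℝ → ℝ be four times differentiable with a(t) > 0 for all t, set F_n(t) = (D−2n)·(D(D−1)(k + ȧ(t)²)/a(t)²)^n, and define the Euler–Lagrange expression E(t) = (∂L/∂α)(a(t),ȧ(t),ä(t)) − (d/dt)[ s ↦ (∂L/∂v)(a(s),ȧ(s),ä(s)) ](t) + (d²/dt²)[ s ↦ (∂L/∂w)(a(s),ȧ(s),ä(s)) ](t). Then for every t: ȧ(t)·E(t) = (a(t)^{D−1}/D)·(d/dt)F_n(t) + ((D−1)/D)·a(t)^{D−2}·ȧ(t)·F_n(t). -/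
lemma sum_p_choose (X Y : ℝ) (n : ℕ) :
    ∑ p ∈ Finset.range (n+1), (p:ℝ) * (n.choose p : ℝ) * X ^ p * Y ^ (n - p)
      = n * X * (X + Y) ^ (n - 1) := by
  cases n with
  | zero => simp
  | succ m =>
    rw [Finset.sum_range_succ']
    have h1 : ∀ i : ℕ, ((i:ℝ)+1) * ((m+1).choose (i+1) : ℝ) = ((m:ℝ)+1) * (m.choose i : ℝ) := by
      intro i
      have h2 : ((Nat.succ m * m.choose i : ℕ) : ℝ) = (((m+1).choose (i+1) * (i+1) : ℕ) : ℝ) := by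
        rw [Nat.add_one_mul_choose_eq m i]
      push_cast at h2
      linarith [h2]
    have h3 : (X + Y) ^ m = ∑ i ∈ Finset.range (m+1), X ^ i * Y ^ (m - i) * (m.choose i : ℝ) :=
      add_pow X Y m
    simp only [Nat.cast_zero, zero_mul, add_zero, Nat.add_sub_cancel, Nat.succ_sub_succ,
      Nat.cast_add, Nat.cast_one, Nat.sub_zero]
    rw [h3, Finset.mul_sum]
    apply Finset.sum_congr rfl
    intro i _
    rw [show ((i:ℝ)+1) * (((m+1).choose (i+1) : ℕ) : ℝ) * X ^ (i+1) * Y ^ (m - i)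
      = (((i:ℝ)+1) * ((m+1).choose (i+1) : ℝ)) * (X ^ (i+1) * Y ^ (m - i)) from by ring]
    rw [h1 i]
    ring

lemma sum_one_sub_mul_choose (X Y : ℝ) (n : ℕ) :
    ∑ p ∈ Finset.range (n+1), ((1:ℝ) - p) * (n.choose p : ℝ) * X ^ p * Y ^ (n - p)
      = (X + Y) ^ n - n * X * (X + Y) ^ (n - 1) := by
  have h1 : ∀ p ∈ Finset.range (n+1), ((1:ℝ) - p) * (n.choose p : ℝ) * X ^ p * Y ^ (n - p)
      = (n.choose p : ℝ) * X ^ p * Y ^ (n - p) - (p:ℝ) * (n.choose p : ℝ) * X ^ p * Y ^ (n - p) := by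
    intro p _; ring
  rw [Finset.sum_congr rfl h1, Finset.sum_sub_distrib, sum_p_choose]
  congr 1
  rw [add_pow]
  apply Finset.sum_congr rfl
  intro i _; ring

lemma L_closed (m : ℕ) (d k x v w : ℝ) (hx : x ≠ 0) (hd : d ≠ 0) (hd2 : d - 2 ≠ 0) :
    ∑ p ∈ Finset.range (m+1+1),
      (-(2:ℝ)^p * ((p:ℝ)-1) * ((m+1).choose p : ℝ) * (d*(d-1)/(d-2))^p)
        * ((d-2)*(k+v^2-x*w)/(d*x^2))^p * ((d-1)*((d-2)*(k+v^2)+2*x*w)/x^2)^(m+1-p)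
    = (d*(d-1)*(k+v^2)/x^2)^(m+1)
       - ((m:ℝ)+1) * (2*(d-1)*(k+v^2-x*w)/x^2) * (d*(d-1)*(k+v^2)/x^2)^m := by
  set X : ℝ := 2*(d-1)*(k+v^2-x*w)/x^2 with hXdef
  set Y : ℝ := (d-1)*((d-2)*(k+v^2)+2*x*w)/x^2 with hYdef
  have hX : X = 2*(d*(d-1)/(d-2)) * ((d-2)*(k+v^2-x*w)/(d*x^2)) := by
    rw [hXdef]; field_simp
  have hXY : X + Y = d*(d-1)*(k+v^2)/x^2 := by
    rw [hXdef, hYdef]; field_simp; ring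
  have hterm : ∀ p ∈ Finset.range (m+1+1),
      (-(2:ℝ)^p * ((p:ℝ)-1) * ((m+1).choose p : ℝ) * (d*(d-1)/(d-2))^p)
        * ((d-2)*(k+v^2-x*w)/(d*x^2))^p * ((d-1)*((d-2)*(k+v^2)+2*x*w)/x^2)^(m+1-p)
      = ((1:ℝ) - p) * ((m+1).choose p : ℝ) * X ^ p * Y ^ (m+1-p) := by
    intro p _
    rw [hX, mul_pow, mul_pow]
    ring
  rw [Finset.sum_congr rfl hterm, sum_one_sub_mul_choose X Y (m+1), hXY]
  simp only [Nat.add_sub_cancel, Nat.cast_add, Nat.cast_one]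

set_option maxHeartbeats 4000000 in
theorem stmt_12 (n D : ℕ) (hn : 1 ≤ n) (hD : 3 ≤ D) (k : ℝ)
    (a : ℝ → ℝ) (ha : ∀ t, 0 < a t)
    (h1 : Differentiable ℝ a) (h2 : Differentiable ℝ (deriv a))
    (h3 : Differentiable ℝ (deriv (deriv a)))
    (h4 : Differentiable ℝ (deriv (deriv (deriv a)))) :
    let β : ℕ → ℝ := fun p =>
      -(2 : ℝ) ^ p * ((p : ℝ) - 1) * (n.choose p : ℝ) *
        ((D : ℝ) * ((D : ℝ) - 1) / ((D : ℝ) - 2)) ^ p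
    let G1 : ℝ → ℝ → ℝ → ℝ := fun x v w =>
      ((D : ℝ) - 2) * (k + v ^ 2 - x * w) / ((D : ℝ) * x ^ 2)
    let S1 : ℝ → ℝ → ℝ → ℝ := fun x v w =>
      ((D : ℝ) - 1) * (((D : ℝ) - 2) * (k + v ^ 2) + 2 * x * w) / x ^ 2
    let L : ℝ → ℝ → ℝ → ℝ := fun x v w =>
      x ^ (D - 1) * ∑ p ∈ Finset.range (n + 1), β p * G1 x v w ^ p * S1 x v w ^ (n - p)
    let Fn : ℝ → ℝ := fun t =>
      ((D : ℝ) - 2 * (n : ℝ)) *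
        ((D : ℝ) * ((D : ℝ) - 1) * (k + (deriv a t) ^ 2) / (a t) ^ 2) ^ n
    let E : ℝ → ℝ := fun t =>
      deriv (fun x => L x (deriv a t) (deriv (deriv a) t)) (a t)
        - deriv (fun s => deriv (fun v => L (a s) v (deriv (deriv a) s)) (deriv a s)) t
        + deriv (deriv (fun s =>
            deriv (fun w => L (a s) (deriv a s) w) (deriv (deriv a) s))) t
    ∀ t : ℝ,
      deriv a t * E t
        = a t ^ (D - 1) / (D : ℝ) * deriv Fn t
          + ((D : ℝ) - 1) / (D : ℝ) * a t ^ (D - 2) * deriv a t * Fn t := by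
  obtain ⟨m, rfl⟩ : ∃ j, n = j + 1 := ⟨n - 1, by omega⟩
  obtain ⟨d3, rfl⟩ : ∃ j, D = j + 3 := ⟨D - 3, by omega⟩
  intro β G1 S1 L Fn E t
  have hane : ∀ s, a s ≠ 0 := fun s => (ha s).ne'
  have hd0 : ((d3 + 3 : ℕ) : ℝ) ≠ 0 := by positivity
  have hd2 : ((d3 + 3 : ℕ) : ℝ) - 2 ≠ 0 := by
    have : (0:ℝ) ≤ (d3:ℝ) := Nat.cast_nonneg d3
    push_cast
    linarith
  have hA : ∀ s, HasDerivAt a (deriv a s) s := fun s => (h1 s).hasDerivAt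
  have hV : ∀ s, HasDerivAt (deriv a) (deriv (deriv a) s) s := fun s => (h2 s).hasDerivAt
  have hW : ∀ s, HasDerivAt (deriv (deriv a)) (deriv (deriv (deriv a)) s) s :=
    fun s => (h3 s).hasDerivAt
  -- closed form of L
  have hLg : ∀ x v w : ℝ, x ≠ 0 → L x v w = ((((d3 + 3 : ℕ) : ℝ) * (((d3 + 3 : ℕ) : ℝ) - 1)) ^ (m + 1) * (k + v ^ 2) ^ (m + 1) - (2 * ((m : ℝ) + 1) * (((d3 + 3 : ℕ) : ℝ) - 1) * (((d3 + 3 : ℕ) : ℝ) * (((d3 + 3 : ℕ) : ℝ) - 1)) ^ m) * (k + v ^ 2) ^ m * ((k + v ^ 2) - x * w)) * (x ^ (d3 + 2) / x ^ (2 * m + 2)) := by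
    intro x v w hx
    simp only [L, β, G1, S1]
    rw [L_closed m ((d3 + 3 : ℕ) : ℝ) k x v w hx hd0 hd2]
    rw [show d3 + 3 - 1 = d3 + 2 from rfl]
    simp only [mul_pow, div_pow]
    field_simp
    ring
  -- basic derivative chains
  have hu : ∀ s, HasDerivAt (fun s => k + deriv a s ^ 2)
      (2 * deriv a s * deriv (deriv a) s) s := fun s =>
    (((hV s).pow 2).const_add k).congr_deriv (by push_cast [id_eq, show (2:ℕ) - 1 = 1 from rfl, show m + 1 - 1 = m from rfl, show d3 + 2 - 1 = d3 + 1 from rfl, show d3 + 3 - 1 = d3 + 2 from rfl, show 2 * m + 2 - 1 = 2 * m + 1 from rfl, show 2 * m + 1 - 1 = 2 * m from rfl]; ring)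
  have hup : ∀ (j : ℕ) (s : ℝ), HasDerivAt (fun s => (k + deriv a s ^ 2) ^ j)
      ((j:ℝ) * (k + deriv a s ^ 2) ^ (j - 1) * (2 * deriv a s * deriv (deriv a) s)) s :=
    fun j s => (hu s).pow j
  have hap : ∀ (j : ℕ) (s : ℝ), HasDerivAt (fun s => a s ^ j)
      ((j:ℝ) * a s ^ (j - 1) * deriv a s) s := fun j s => (hA s).pow j
  have hRc : ∀ s, HasDerivAt (fun s => a s ^ (d3 + 2) / a s ^ (2 * m + 2))
      (((((d3 : ℝ) + 2) * (a s) ^ (d3 + 1) * (a s) ^ (2 * m + 2) - (a s) ^ (d3 + 2) * ((2 * (m : ℝ) + 2) * (a s) ^ (2 * m + 1))) / ((a s) ^ (2 * m + 2)) ^ 2) * deriv a s) s := fun s =>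
    ((hap (d3+2) s).div (hap (2*m+2) s) (pow_ne_zero _ (hane s))).congr_deriv
      (by push_cast [id_eq, show (2:ℕ) - 1 = 1 from rfl, show m + 1 - 1 = m from rfl, show d3 + 2 - 1 = d3 + 1 from rfl, show d3 + 3 - 1 = d3 + 2 from rfl, show 2 * m + 2 - 1 = 2 * m + 1 from rfl, show 2 * m + 1 - 1 = 2 * m from rfl]; ring)
  have hR3c : ∀ s, HasDerivAt (fun s => a s ^ (d3 + 3) / a s ^ (2 * m + 2))
      (((((d3 : ℝ) + 3) * (a s) ^ (d3 + 2) * (a s) ^ (2 * m + 2) - (a s) ^ (d3 + 3) * ((2 * (m : ℝ) + 2) * (a s) ^ (2 * m + 1))) / ((a s) ^ (2 * m + 2)) ^ 2) * deriv a s) s := fun s =>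
    ((hap (d3+3) s).div (hap (2*m+2) s) (pow_ne_zero _ (hane s))).congr_deriv
      (by push_cast [id_eq, show (2:ℕ) - 1 = 1 from rfl, show m + 1 - 1 = m from rfl, show d3 + 2 - 1 = d3 + 1 from rfl, show d3 + 3 - 1 = d3 + 2 from rfl, show 2 * m + 2 - 1 = 2 * m + 1 from rfl, show 2 * m + 1 - 1 = 2 * m from rfl]; ring)
  have hDR3c : ∀ s, HasDerivAt (fun s => ((((d3 : ℝ) + 3) * (a s) ^ (d3 + 2) * (a s) ^ (2 * m + 2) - (a s) ^ (d3 + 3) * ((2 * (m : ℝ) + 2) * (a s) ^ (2 * m + 1))) / ((a s) ^ (2 * m + 2)) ^ 2))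
      ((((((d3 : ℝ) + 3) * (((d3 : ℝ) + 2) * (a s) ^ (d3 + 1) * (a s) ^ (2 * m + 2) + (a s) ^ (d3 + 2) * ((2 * (m : ℝ) + 2) * (a s) ^ (2 * m + 1))) - (((d3 : ℝ) + 3) * (a s) ^ (d3 + 2) * ((2 * (m : ℝ) + 2) * (a s) ^ (2 * m + 1)) + (a s) ^ (d3 + 3) * ((2 * (m : ℝ) + 2) * ((2 * (m : ℝ) + 1) * (a s) ^ (2 * m))))) * (((a s) ^ (2 * m + 2)) ^ 2) - (((d3 : ℝ) + 3) * (a s) ^ (d3 + 2) * (a s) ^ (2 * m + 2) - (a s) ^ (d3 + 3) * ((2 * (m : ℝ) + 2) * (a s) ^ (2 * m + 1))) * ((4 * (m : ℝ) + 4) * (a s) ^ (4 * m + 3))) / (((a s) ^ (2 * m + 2)) ^ 2) ^ 2) * deriv a s) s := by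
    intro s
    have hnum := (((hap (d3+2) s).const_mul ((d3:ℝ)+3)).mul (hap (2*m+2) s)).sub
      ((hap (d3+3) s).mul ((hap (2*m+1) s).const_mul (2*(m:ℝ)+2)))
    have hden := ((hA s).pow (2*m+2)).pow 2
    exact (hnum.div hden (pow_ne_zero _ (pow_ne_zero _ (hane s)))).congr_deriv
      (by push_cast [id_eq, Pi.mul_apply, Pi.pow_apply, Pi.sub_apply, Pi.add_apply, Pi.div_apply, show (2:ℕ) - 1 = 1 from rfl, show m + 1 - 1 = m from rfl, show d3 + 2 - 1 = d3 + 1 from rfl, show d3 + 3 - 1 = d3 + 2 from rfl, show 2 * m + 2 - 1 = 2 * m + 1 from rfl, show 2 * m + 1 - 1 = 2 * m from rfl]; ring)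
  -- first E-term
  have hgx : deriv (fun x => L x (deriv a t) (deriv (deriv a) t)) (a t) = (2 * ((m : ℝ) + 1) * (((d3 + 3 : ℕ) : ℝ) - 1) * (((d3 + 3 : ℕ) : ℝ) * (((d3 + 3 : ℕ) : ℝ) - 1)) ^ m) * (k + (deriv a t) ^ 2) ^ m * (deriv (deriv a) t) * ((a t) ^ (d3 + 2) / (a t) ^ (2 * m + 2)) + ((((d3 + 3 : ℕ) : ℝ) * (((d3 + 3 : ℕ) : ℝ) - 1)) ^ (m + 1) * (k + (deriv a t) ^ 2) ^ (m + 1) - (2 * ((m : ℝ) + 1) * (((d3 + 3 : ℕ) : ℝ) - 1) * (((d3 + 3 : ℕ) : ℝ) * (((d3 + 3 : ℕ) : ℝ) - 1)) ^ m) * (k + (deriv a t) ^ 2) ^ m * ((k + (deriv a t) ^ 2) - (a t) * (deriv (deriv a) t))) * ((((d3 : ℝ) + 2) * (a t) ^ (d3 + 1) * (a t) ^ (2 * m + 2) - (a t) ^ (d3 + 2) * ((2 * (m : ℝ) + 2) * (a t) ^ (2 * m + 1))) / ((a t) ^ (2 * m + 2)) ^ 2) := by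
    have hev : (fun x => L x (deriv a t) (deriv (deriv a) t))
        =ᶠ[nhds (a t)] (fun x => ((((d3 + 3 : ℕ) : ℝ) * (((d3 + 3 : ℕ) : ℝ) - 1)) ^ (m + 1) * (k + (deriv a t) ^ 2) ^ (m + 1) - (2 * ((m : ℝ) + 1) * (((d3 + 3 : ℕ) : ℝ) - 1) * (((d3 + 3 : ℕ) : ℝ) * (((d3 + 3 : ℕ) : ℝ) - 1)) ^ m) * (k + (deriv a t) ^ 2) ^ m * ((k + (deriv a t) ^ 2) - x * (deriv (deriv a) t))) * (x ^ (d3 + 2) / x ^ (2 * m + 2))) := by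
      filter_upwards [eventually_gt_nhds (ha t)] with x hx
      exact hLg x _ _ (ne_of_gt hx)
    rw [hev.deriv_eq]
    have hbr := (hasDerivAt_const (a t) ((((d3 + 3 : ℕ) : ℝ) * (((d3 + 3 : ℕ) : ℝ) - 1)) ^ (m + 1) * (k + (deriv a t) ^ 2) ^ (m + 1))).sub
      (((hasDerivAt_const (a t) (k + (deriv a t) ^ 2)).sub ((hasDerivAt_id (a t)).mul_const (deriv (deriv a) t))).const_mul
        ((2 * ((m : ℝ) + 1) * (((d3 + 3 : ℕ) : ℝ) - 1) * (((d3 + 3 : ℕ) : ℝ) * (((d3 + 3 : ℕ) : ℝ) - 1)) ^ m) * (k + (deriv a t) ^ 2) ^ m))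
    have hdiv := (hasDerivAt_pow (d3+2) (a t)).div (hasDerivAt_pow (2*m+2) (a t))
      (pow_ne_zero _ (hane t))
    exact HasDerivAt.deriv ((hbr.mul hdiv).congr_deriv (by push_cast [id_eq, Pi.mul_apply, Pi.pow_apply, Pi.sub_apply, Pi.add_apply, Pi.div_apply, show (2:ℕ) - 1 = 1 from rfl, show m + 1 - 1 = m from rfl, show d3 + 2 - 1 = d3 + 1 from rfl, show d3 + 3 - 1 = d3 + 2 from rfl, show 2 * m + 2 - 1 = 2 * m + 1 from rfl, show 2 * m + 1 - 1 = 2 * m from rfl]; ring))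
  -- second E-term : value of inner v-derivative
  have hq : ∀ s, deriv (fun v => L (a s) v (deriv (deriv a) s)) (deriv a s)
      = ((((d3 + 3 : ℕ) : ℝ) * (((d3 + 3 : ℕ) : ℝ) - 1)) ^ (m + 1) * (((m : ℝ) + 1) * (k + (deriv a s) ^ 2) ^ m * (2 * (deriv a s))) - (2 * ((m : ℝ) + 1) * (((d3 + 3 : ℕ) : ℝ) - 1) * (((d3 + 3 : ℕ) : ℝ) * (((d3 + 3 : ℕ) : ℝ) - 1)) ^ m) * (((m : ℝ) * (k + (deriv a s) ^ 2) ^ (m - 1) * (2 * (deriv a s))) * ((k + (deriv a s) ^ 2) - (a s) * (deriv (deriv a) s)) + (k + (deriv a s) ^ 2) ^ m * (2 * (deriv a s)))) * ((a s) ^ (d3 + 2) / (a s) ^ (2 * m + 2)) := by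
    intro s
    rw [show (fun v => L (a s) v (deriv (deriv a) s))
        = (fun v => ((((d3 + 3 : ℕ) : ℝ) * (((d3 + 3 : ℕ) : ℝ) - 1)) ^ (m + 1) * (k + v ^ 2) ^ (m + 1) - (2 * ((m : ℝ) + 1) * (((d3 + 3 : ℕ) : ℝ) - 1) * (((d3 + 3 : ℕ) : ℝ) * (((d3 + 3 : ℕ) : ℝ) - 1)) ^ m) * (k + v ^ 2) ^ m * ((k + v ^ 2) - (a s) * (deriv (deriv a) s))) * ((a s) ^ (d3 + 2) / (a s) ^ (2 * m + 2))) from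
      funext fun v => hLg _ v _ (hane s)]
    have huv : HasDerivAt (fun v : ℝ => k + v ^ 2) (2 * deriv a s) (deriv a s) :=
      ((hasDerivAt_pow 2 (deriv a s)).const_add k).congr_deriv (by push_cast [id_eq, show (2:ℕ) - 1 = 1 from rfl, show m + 1 - 1 = m from rfl, show d3 + 2 - 1 = d3 + 1 from rfl, show d3 + 3 - 1 = d3 + 2 from rfl, show 2 * m + 2 - 1 = 2 * m + 1 from rfl, show 2 * m + 1 - 1 = 2 * m from rfl]; ring)
    have hch := (((huv.pow (m+1)).const_mul ((((d3 + 3 : ℕ) : ℝ) * (((d3 + 3 : ℕ) : ℝ) - 1)) ^ (m+1))).sub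
      (((huv.pow m).const_mul (2 * ((m : ℝ) + 1) * (((d3 + 3 : ℕ) : ℝ) - 1) * (((d3 + 3 : ℕ) : ℝ) * (((d3 + 3 : ℕ) : ℝ) - 1)) ^ m)).mul
        (huv.sub (hasDerivAt_const (deriv a s) ((a s) * (deriv (deriv a) s)))))).mul_const
      ((a s) ^ (d3 + 2) / (a s) ^ (2 * m + 2))
    exact HasDerivAt.deriv (hch.congr_deriv (by push_cast [id_eq, Pi.mul_apply, Pi.pow_apply, Pi.sub_apply, Pi.add_apply, Pi.div_apply, show (2:ℕ) - 1 = 1 from rfl, show m + 1 - 1 = m from rfl, show d3 + 2 - 1 = d3 + 1 from rfl, show d3 + 3 - 1 = d3 + 2 from rfl, show 2 * m + 2 - 1 = 2 * m + 1 from rfl, show 2 * m + 1 - 1 = 2 * m from rfl]; ring))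
  have hQd : HasDerivAt (fun s => ((((d3 + 3 : ℕ) : ℝ) * (((d3 + 3 : ℕ) : ℝ) - 1)) ^ (m + 1) * (((m : ℝ) + 1) * (k + (deriv a s) ^ 2) ^ m * (2 * (deriv a s))) - (2 * ((m : ℝ) + 1) * (((d3 + 3 : ℕ) : ℝ) - 1) * (((d3 + 3 : ℕ) : ℝ) * (((d3 + 3 : ℕ) : ℝ) - 1)) ^ m) * (((m : ℝ) * (k + (deriv a s) ^ 2) ^ (m - 1) * (2 * (deriv a s))) * ((k + (deriv a s) ^ 2) - (a s) * (deriv (deriv a) s)) + (k + (deriv a s) ^ 2) ^ m * (2 * (deriv a s)))) * ((a s) ^ (d3 + 2) / (a s) ^ (2 * m + 2)))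
      (((((d3 + 3 : ℕ) : ℝ) * (((d3 + 3 : ℕ) : ℝ) - 1)) ^ (m + 1) * (((m : ℝ) + 1) * ((m : ℝ) * (k + (deriv a t) ^ 2) ^ (m - 1) * (2 * (deriv a t) * (deriv (deriv a) t)) * (2 * (deriv a t)) + (k + (deriv a t) ^ 2) ^ m * (2 * (deriv (deriv a) t)))) - (2 * ((m : ℝ) + 1) * (((d3 + 3 : ℕ) : ℝ) - 1) * (((d3 + 3 : ℕ) : ℝ) * (((d3 + 3 : ℕ) : ℝ) - 1)) ^ m) * ((m : ℝ) * (((m - 1 : ℕ) : ℝ) * (k + (deriv a t) ^ 2) ^ (m - 1 - 1) * (2 * (deriv a t) * (deriv (deriv a) t)) * (2 * (deriv a t)) * ((k + (deriv a t) ^ 2) - (a t) * (deriv (deriv a) t)) + (k + (deriv a t) ^ 2) ^ (m - 1) * (2 * (deriv (deriv a) t) * ((k + (deriv a t) ^ 2) - (a t) * (deriv (deriv a) t)) + 2 * (deriv a t) * ((2 * (deriv a t) * (deriv (deriv a) t)) - ((deriv a t) * (deriv (deriv a) t) + (a t) * (deriv (deriv (deriv a)) t))))) + ((m : ℝ) *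 (k + (deriv a t) ^ 2) ^ (m - 1) * (2 * (deriv a t) * (deriv (deriv a) t)) * (2 * (deriv a t)) + (k + (deriv a t) ^ 2) ^ m * (2 * (deriv (deriv a) t))))) * ((a t) ^ (d3 + 2) / (a t) ^ (2 * m + 2)) + ((((d3 + 3 : ℕ) : ℝ) * (((d3 + 3 : ℕ) : ℝ) - 1)) ^ (m + 1) * (((m : ℝ) + 1) * (k + (deriv a t) ^ 2) ^ m * (2 * (deriv a t))) - (2 * ((m : ℝ) + 1) * (((d3 + 3 : ℕ) : ℝ) - 1) * (((d3 + 3 : ℕ) : ℝ) * (((d3 + 3 : ℕ) : ℝ) - 1)) ^ m) * (((m : ℝ) * (k + (deriv a t) ^ 2) ^ (m - 1) * (2 * (deriv a t))) * ((k + (deriv a t) ^ 2) - (a t) * (deriv (deriv a) t)) + (k + (deriv a t) ^ 2) ^ m * (2 * (deriv a t)))) * (((((d3 : ℝ) + 2) * (a t) ^ (d3 + 1) * (a t) ^ (2 * m + 2) - (a t) ^ (d3 + 2) * ((2 * (m : ℝ) + 2) * (a t) ^ (2 * m + 1))) / ((a t) ^ (2 * m + 2)) ^ 2) * (deriv a t)))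 t := by
    have hQ1 := (((hup m t).const_mul ((m:ℝ)+1)).mul ((hV t).const_mul 2)).const_mul
      ((((d3 + 3 : ℕ) : ℝ) * (((d3 + 3 : ℕ) : ℝ) - 1)) ^ (m+1))
    have hQ2a := (((hup (m-1) t).const_mul ((m:ℝ))).mul ((hV t).const_mul 2)).mul
      ((hu t).sub ((hA t).mul (hW t)))
    have hQ2b := (hup m t).mul ((hV t).const_mul 2)
    have hch := ((hQ1.sub ((hQ2a.add hQ2b).const_mul (2 * ((m : ℝ) + 1) * (((d3 + 3 : ℕ) : ℝ) - 1) * (((d3 + 3 : ℕ) : ℝ) * (((d3 + 3 : ℕ) : ℝ) - 1)) ^ m))).mul (hRc t))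
    exact hch.congr_deriv (by push_cast [id_eq, Pi.mul_apply, Pi.pow_apply, Pi.sub_apply, Pi.add_apply, Pi.div_apply, show (2:ℕ) - 1 = 1 from rfl, show m + 1 - 1 = m from rfl, show d3 + 2 - 1 = d3 + 1 from rfl, show d3 + 3 - 1 = d3 + 2 from rfl, show 2 * m + 2 - 1 = 2 * m + 1 from rfl, show 2 * m + 1 - 1 = 2 * m from rfl]; ring)
  -- third E-term
  have hp : ∀ s, deriv (fun w => L (a s) (deriv a s) w) (deriv (deriv a) s)
      = (2 * ((m : ℝ) + 1) * (((d3 + 3 : ℕ) : ℝ) - 1) * (((d3 + 3 : ℕ) : ℝ) * (((d3 + 3 : ℕ) : ℝ) - 1)) ^ m) * (k + (deriv a s) ^ 2) ^ m * ((a s) ^ (d3 + 3) / (a s) ^ (2 * m + 2)) := by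
    intro s
    rw [show (fun w => L (a s) (deriv a s) w)
        = (fun w => ((((d3 + 3 : ℕ) : ℝ) * (((d3 + 3 : ℕ) : ℝ) - 1)) ^ (m + 1) * (k + (deriv a s) ^ 2) ^ (m + 1) - (2 * ((m : ℝ) + 1) * (((d3 + 3 : ℕ) : ℝ) - 1) * (((d3 + 3 : ℕ) : ℝ) * (((d3 + 3 : ℕ) : ℝ) - 1)) ^ m) * (k + (deriv a s) ^ 2) ^ m * ((k + (deriv a s) ^ 2) - (a s) * w)) * ((a s) ^ (d3 + 2) / (a s) ^ (2 * m + 2))) from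
      funext fun w => hLg _ _ w (hane s)]
    have hch := ((hasDerivAt_const (deriv (deriv a) s)
        ((((d3 + 3 : ℕ) : ℝ) * (((d3 + 3 : ℕ) : ℝ) - 1)) ^ (m + 1) * (k + (deriv a s) ^ 2) ^ (m + 1))).sub
      (((hasDerivAt_const (deriv (deriv a) s) (k + (deriv a s) ^ 2)).sub
        ((hasDerivAt_id (deriv (deriv a) s)).const_mul (a s))).const_mul
        ((2 * ((m : ℝ) + 1) * (((d3 + 3 : ℕ) : ℝ) - 1) * (((d3 + 3 : ℕ) : ℝ) * (((d3 + 3 : ℕ) : ℝ) - 1)) ^ m) * (k + (deriv a s) ^ 2) ^ m))).mul_const ((a s) ^ (d3 + 2) / (a s) ^ (2 * m + 2))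
    exact HasDerivAt.deriv (hch.congr_deriv (by push_cast [id_eq, show (2:ℕ) - 1 = 1 from rfl, show m + 1 - 1 = m from rfl, show d3 + 2 - 1 = d3 + 1 from rfl, show d3 + 3 - 1 = d3 + 2 from rfl, show 2 * m + 2 - 1 = 2 * m + 1 from rfl, show 2 * m + 1 - 1 = 2 * m from rfl]; field_simp; ring))
  have hPfun : (deriv fun s => (2 * ((m : ℝ) + 1) * (((d3 + 3 : ℕ) : ℝ) - 1) * (((d3 + 3 : ℕ) : ℝ) * (((d3 + 3 : ℕ) : ℝ) - 1)) ^ m) * (k + (deriv a s) ^ 2) ^ m * ((a s) ^ (d3 + 3) / (a s) ^ (2 * m + 2)))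
      = fun s => (2 * ((m : ℝ) + 1) * (((d3 + 3 : ℕ) : ℝ) - 1) * (((d3 + 3 : ℕ) : ℝ) * (((d3 + 3 : ℕ) : ℝ) - 1)) ^ m) * ((m : ℝ) * (k + (deriv a s) ^ 2) ^ (m - 1) * (2 * (deriv a s) * (deriv (deriv a) s)) * ((a s) ^ (d3 + 3) / (a s) ^ (2 * m + 2)) + (k + (deriv a s) ^ 2) ^ m * (((((d3 : ℝ) + 3) * (a s) ^ (d3 + 2) * (a s) ^ (2 * m + 2) - (a s) ^ (d3 + 3) * ((2 * (m : ℝ) + 2) * (a s) ^ (2 * m + 1))) / ((a s) ^ (2 * m + 2)) ^ 2) * (deriv a s))) := by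
    funext s
    exact HasDerivAt.deriv ((((hup m s).const_mul (2 * ((m : ℝ) + 1) * (((d3 + 3 : ℕ) : ℝ) - 1) * (((d3 + 3 : ℕ) : ℝ) * (((d3 + 3 : ℕ) : ℝ) - 1)) ^ m)).mul (hR3c s)).congr_deriv
      (by push_cast [id_eq, show (2:ℕ) - 1 = 1 from rfl, show m + 1 - 1 = m from rfl, show d3 + 2 - 1 = d3 + 1 from rfl, show d3 + 3 - 1 = d3 + 2 from rfl, show 2 * m + 2 - 1 = 2 * m + 1 from rfl, show 2 * m + 1 - 1 = 2 * m from rfl]; ring))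
  have hP2 : HasDerivAt (fun s => (2 * ((m : ℝ) + 1) * (((d3 + 3 : ℕ) : ℝ) - 1) * (((d3 + 3 : ℕ) : ℝ) * (((d3 + 3 : ℕ) : ℝ) - 1)) ^ m) * ((m : ℝ) * (k + (deriv a s) ^ 2) ^ (m - 1) * (2 * (deriv a s) * (deriv (deriv a) s)) * ((a s) ^ (d3 + 3) / (a s) ^ (2 * m + 2)) + (k + (deriv a s) ^ 2) ^ m * (((((d3 : ℝ) + 3) * (a s) ^ (d3 + 2) * (a s) ^ (2 * m + 2) - (a s) ^ (d3 + 3) * ((2 * (m : ℝ) + 2) * (a s) ^ (2 * m + 1))) / ((a s) ^ (2 * m + 2)) ^ 2) * (deriv a s))))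
      ((2 * ((m : ℝ) + 1) * (((d3 + 3 : ℕ) : ℝ) - 1) * (((d3 + 3 : ℕ) : ℝ) * (((d3 + 3 : ℕ) : ℝ) - 1)) ^ m) * ((m : ℝ) * (((m - 1 : ℕ) : ℝ) * (k + (deriv a t) ^ 2) ^ (m - 1 - 1) * (2 * (deriv a t) * (deriv (deriv a) t)) * (2 * (deriv a t) * (deriv (deriv a) t)) * ((a t) ^ (d3 + 3) / (a t) ^ (2 * m + 2)) + (k + (deriv a t) ^ 2) ^ (m - 1) * (2 * (deriv (deriv a) t) * (deriv (deriv a) t) + 2 * (deriv a t) * (deriv (deriv (deriv a)) t)) * ((a t) ^ (d3 + 3) / (a t) ^ (2 * m + 2)) + (k + (deriv a t) ^ 2) ^ (m - 1) * (2 * (deriv a t) * (deriv (deriv a) t)) * (((((d3 : ℝ) + 3) * (a t) ^ (d3 + 2) * (a t) ^ (2 * m + 2) - (a t) ^ (d3 + 3) * ((2 * (m : ℝ) + 2) * (a t) ^ (2 * m + 1))) / ((a t) ^ (2 * m + 2)) ^ 2) * (deriv a t))) + (m : ℝ) * (k + (deriv a t) ^ 2) ^ (m - 1) * (2 * (deriv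 a t) * (deriv (deriv a) t)) * (((((d3 : ℝ) + 3) * (a t) ^ (d3 + 2) * (a t) ^ (2 * m + 2) - (a t) ^ (d3 + 3) * ((2 * (m : ℝ) + 2) * (a t) ^ (2 * m + 1))) / ((a t) ^ (2 * m + 2)) ^ 2) * (deriv a t)) + (k + (deriv a t) ^ 2) ^ m * ((((((d3 : ℝ) + 3) * (((d3 : ℝ) + 2) * (a t) ^ (d3 + 1) * (a t) ^ (2 * m + 2) + (a t) ^ (d3 + 2) * ((2 * (m : ℝ) + 2) * (a t) ^ (2 * m + 1))) - (((d3 : ℝ) + 3) * (a t) ^ (d3 + 2) * ((2 * (m : ℝ) + 2) * (a t) ^ (2 * m + 1)) + (a t) ^ (d3 + 3) * ((2 * (m : ℝ) + 2) * ((2 * (m : ℝ) + 1) * (a t) ^ (2 * m))))) * (((a t) ^ (2 * m + 2)) ^ 2) - (((d3 : ℝ) + 3) * (a t) ^ (d3 + 2) * (a t) ^ (2 * m + 2) - (a t) ^ (d3 + 3) * ((2 * (m : ℝ) + 2) * (a t) ^ (2 * m + 1))) * ((4 * (m : ℝ) + 4) * (a t) ^ (4 * m + 3))) / (((a t) ^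 (2 * m + 2)) ^ 2) ^ 2) * (deriv a t)) * (deriv a t) + (k + (deriv a t) ^ 2) ^ m * (((((d3 : ℝ) + 3) * (a t) ^ (d3 + 2) * (a t) ^ (2 * m + 2) - (a t) ^ (d3 + 3) * ((2 * (m : ℝ) + 2) * (a t) ^ (2 * m + 1))) / ((a t) ^ (2 * m + 2)) ^ 2) * (deriv (deriv a) t)))) t := by
    have hT1 := ((((hup (m-1) t).const_mul ((m:ℝ))).mul
      (((hV t).const_mul 2).mul (hW t))).mul (hR3c t))
    have hT2 := (hup m t).mul ((hDR3c t).mul (hV t))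
    exact ((hT1.add hT2).const_mul (2 * ((m : ℝ) + 1) * (((d3 + 3 : ℕ) : ℝ) - 1) * (((d3 + 3 : ℕ) : ℝ) * (((d3 + 3 : ℕ) : ℝ) - 1)) ^ m)).congr_deriv (by push_cast [id_eq, Pi.mul_apply, Pi.pow_apply, Pi.sub_apply, Pi.add_apply, Pi.div_apply, show (2:ℕ) - 1 = 1 from rfl, show m + 1 - 1 = m from rfl, show d3 + 2 - 1 = d3 + 1 from rfl, show d3 + 3 - 1 = d3 + 2 from rfl, show 2 * m + 2 - 1 = 2 * m + 1 from rfl, show 2 * m + 1 - 1 = 2 * m from rfl]; ring)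
  -- Fn derivative
  have hFn : HasDerivAt (fun t => (((d3 + 3 : ℕ) : ℝ) - 2 * ((m + 1 : ℕ) : ℝ)) *
      (((d3 + 3 : ℕ) : ℝ) * (((d3 + 3 : ℕ) : ℝ) - 1) * (k + deriv a t ^ 2) / a t ^ 2) ^ (m + 1)) ((((d3 + 3 : ℕ) : ℝ) - 2 * ((m : ℝ) + 1)) * (((m : ℝ) + 1) * ((((d3 + 3 : ℕ) : ℝ) * (((d3 + 3 : ℕ) : ℝ) - 1)) * (k + (deriv a t) ^ 2) / (a t) ^ 2) ^ m * (((((d3 + 3 : ℕ) : ℝ) * (((d3 + 3 : ℕ) : ℝ) - 1)) * (2 * (deriv a t) * (deriv (deriv a) t)) * (a t) ^ 2 - (((d3 + 3 : ℕ) : ℝ) * (((d3 + 3 : ℕ) : ℝ) - 1)) * (k + (deriv a t) ^ 2) * (2 * (a t) * (deriv a t))) / ((a t) ^ 2) ^ 2))) t := by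
    have hch := (((((hu t).const_mul (((d3 + 3 : ℕ) : ℝ) * (((d3 + 3 : ℕ) : ℝ) - 1))).div ((hA t).pow 2)
      (pow_ne_zero _ (hane t))).pow (m+1)).const_mul (((d3 + 3 : ℕ) : ℝ) - 2 * ((m + 1 : ℕ) : ℝ)))
    exact hch.congr_deriv (by push_cast [id_eq, Pi.mul_apply, Pi.pow_apply, Pi.sub_apply, Pi.add_apply, Pi.div_apply, show (2:ℕ) - 1 = 1 from rfl, show m + 1 - 1 = m from rfl, show d3 + 2 - 1 = d3 + 1 from rfl, show d3 + 3 - 1 = d3 + 2 from rfl, show 2 * m + 2 - 1 = 2 * m + 1 from rfl, show 2 * m + 1 - 1 = 2 * m from rfl]; ring)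
  -- assemble
  simp only [E]
  rw [hgx,
    show (fun s => deriv (fun v => L (a s) v (deriv (deriv a) s)) (deriv a s))
      = (fun s => ((((d3 + 3 : ℕ) : ℝ) * (((d3 + 3 : ℕ) : ℝ) - 1)) ^ (m + 1) * (((m : ℝ) + 1) * (k + (deriv a s) ^ 2) ^ m * (2 * (deriv a s))) - (2 * ((m : ℝ) + 1) * (((d3 + 3 : ℕ) : ℝ) - 1) * (((d3 + 3 : ℕ) : ℝ) * (((d3 + 3 : ℕ) : ℝ) - 1)) ^ m) * (((m : ℝ) * (k + (deriv a s) ^ 2) ^ (m - 1) * (2 * (deriv a s))) * ((k + (deriv a s) ^ 2) - (a s) * (deriv (deriv a) s)) + (k + (deriv a s) ^ 2) ^ m * (2 * (deriv a s)))) * ((a s) ^ (d3 + 2) / (a s) ^ (2 * m + 2))) from funext hq,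
    hQd.deriv,
    show (fun s => deriv (fun w => L (a s) (deriv a s) w) (deriv (deriv a) s))
      = (fun s => (2 * ((m : ℝ) + 1) * (((d3 + 3 : ℕ) : ℝ) - 1) * (((d3 + 3 : ℕ) : ℝ) * (((d3 + 3 : ℕ) : ℝ) - 1)) ^ m) * (k + (deriv a s) ^ 2) ^ m * ((a s) ^ (d3 + 3) / (a s) ^ (2 * m + 2))) from funext hp,
    hPfun, hP2.deriv]
  simp only [Fn]
  rw [hFn.deriv]
  rw [show d3 + 3 - 1 = d3 + 2 from rfl, show d3 + 3 - 2 = d3 + 1 from rfl]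
  have hx0 : a t ≠ 0 := hane t
  rcases m with _ | _ | j
  · push_cast
    simp only [mul_pow, div_pow]
    field_simp
    ring
  · push_cast
    simp only [mul_pow, div_pow]
    field_simp
    ring
  · push_cast [show j + 2 - 1 = j + 1 from rfl, show j + 2 - 1 - 1 = j from rfl]
    simp only [mul_pow, div_pow]
    field_simp
    ring
end

section
/- Let D ≥ 3 and N ≥ 1 be integers, k, Λ, ℓ real numbers, G a nonzero real, and μ_1, …, μ_N real numbers. Let a : ℝ → ℝ be twice differentiable with a(t) > 0 and ȧ(t) ≠ 0 for all t, and let ρ, P : ℝ → ℝ be differentiable. Set F_n(t) = (D−2n)·(D(D−1)(k + ȧ(t)²)/a(t)²)^n. Assume that for all t: (1/(2D))·Σ_{n=1}^N μ_n·ℓ^{2n}·F_n(t) = 8πG·ρ(t) + Λ, and −(a(t)/(2D(D−1)·ȧ(t)))·Σ_{n=1}^N μ_n·ℓ^{2n}·(d/dt)F_n(t) = 8πG·(ρ(t) + P(t)). Then for all t: ρ'(t) + (D−1)·(ȧ(t)/a(t))·(ρ(t) + P(t)) = 0. -/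
theorem stmt_13 (D N : ℕ) (hD : 3 ≤ D) (hN : 1 ≤ N)
    (k Λ ℓ : ℝ) (G : ℝ) (hG : G ≠ 0) (μ : ℕ → ℝ)
    (a : ℝ → ℝ) (ha : ∀ t, 0 < a t) (ha' : ∀ t, deriv a t ≠ 0)
    (h1 : Differentiable ℝ a) (h2 : Differentiable ℝ (deriv a))
    (ρ P : ℝ → ℝ) (hρ : Differentiable ℝ ρ) (hP : Differentiable ℝ P) :
    let Fn : ℕ → ℝ → ℝ := fun n t =>
      ((D : ℝ) - 2 * (n : ℝ)) *
        ((D : ℝ) * ((D : ℝ) - 1) * (k + (deriv a t) ^ 2) / (a t) ^ 2) ^ n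
    (∀ t : ℝ, 1 / (2 * (D : ℝ)) * ∑ n ∈ Finset.Icc 1 N, μ n * ℓ ^ (2 * n) * Fn n t
        = 8 * Real.pi * G * ρ t + Λ) →
    (∀ t : ℝ, -(a t / (2 * (D : ℝ) * ((D : ℝ) - 1) * deriv a t)) *
        ∑ n ∈ Finset.Icc 1 N, μ n * ℓ ^ (2 * n) * deriv (Fn n) t
        = 8 * Real.pi * G * (ρ t + P t)) →
    ∀ t : ℝ, deriv ρ t + ((D : ℝ) - 1) * (deriv a t / a t) * (ρ t + P t) = 0 := by
  intro Fn heq1 heq2 t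
  have hat : ∀ s, a s ≠ 0 := fun s => (ha s).ne'
  have hg : Differentiable ℝ (fun s =>
      (D : ℝ) * ((D : ℝ) - 1) * (k + (deriv a s) ^ 2) / (a s) ^ 2) := by
    apply Differentiable.div
    · exact (differentiable_const _).mul ((differentiable_const _).add (h2.pow 2))
    · exact h1.pow 2
    · intro s; exact pow_ne_zero _ (hat s)
  have hFn : ∀ n, Differentiable ℝ (Fn n) := fun n => (hg.pow n).const_mul _
  -- differentiate the first Friedmann equation
  have hfun : (fun s => 1 / (2 * (D : ℝ)) *
      ∑ n ∈ Finset.Icc 1 N, μ n * ℓ ^ (2 * n) * Fn n s)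
      = fun s => 8 * Real.pi * G * ρ s + Λ := funext heq1
  have hder := congrArg (fun f => deriv f t) hfun
  have hS : ∀ s, DifferentiableAt ℝ
      (fun s => ∑ n ∈ Finset.Icc 1 N, μ n * ℓ ^ (2 * n) * Fn n s) s := by
    intro s
    exact (Differentiable.fun_sum (fun n _ => ((hFn n).const_mul _))) s
  rw [deriv_const_mul _ (hS t), deriv_add_const, deriv_const_mul _ (hρ t)] at hder
  rw [deriv_fun_sum (fun n _ => ((hFn n).const_mul (μ n * ℓ ^ (2 * n))) t)] at hder
  have hsum : ∀ n ∈ Finset.Icc 1 N,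
      deriv (fun s => μ n * ℓ ^ (2 * n) * Fn n s) t
        = μ n * ℓ ^ (2 * n) * deriv (Fn n) t := by
    intro n _
    exact deriv_const_mul _ ((hFn n) t)
  rw [Finset.sum_congr rfl hsum] at hder
  -- now combine hder with heq2 t
  set A := ∑ n ∈ Finset.Icc 1 N, μ n * ℓ ^ (2 * n) * deriv (Fn n) t with hA
  have e2 := heq2 t
  have hc : (8 : ℝ) * Real.pi * G ≠ 0 := by
    have := Real.pi_ne_zero
    positivity
  have hD0 : (D : ℝ) ≠ 0 := by
    have : (3 : ℝ) ≤ (D : ℝ) := by exact_mod_cast hD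
    linarith
  have hD1 : (D : ℝ) - 1 ≠ 0 := by
    have : (3 : ℝ) ≤ (D : ℝ) := by exact_mod_cast hD
    linarith
  have hat' := hat t
  have ha't := ha' t
  field_simp at hder e2 ⊢
  have key : (8 * Real.pi * G * (2 * (D : ℝ))) *
      (deriv ρ t * a t + ((D : ℝ) - 1) * deriv a t * (ρ t + P t)) = 0 := by
    linear_combination -(a t) * hder - e2
  have h8 : (8 * Real.pi * G * (2 * (D : ℝ))) ≠ 0 := by
    apply mul_ne_zero hc
    simpa using hD0
  rcases mul_eq_zero.mp key with h | h
  · exact absurd h h8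
  · linarith
end

section
/- For every integer n ≥ 3 and all real numbers s, g: s^n − 72·n(n−1)·s^{n−2}·g² − 64·ω_{n,3}·g³·s^{n−3} + Σ_{l=4}^{n} ω_{n,l}·s^{n−l}·(12g²)^{(l−4−π_l)/2}·( (π_l−1)·192·g⁴ − π_l·768·g⁵ ) = Σ_{p=0}^{n} (1−p)·2^p·6^p·binom(n,p)·g^p·s^{n−p}, where π_l = 0 if l is even and π_l = 1 if l is odd, and ω_{n,l} = 2^{l−2−π_l}·3^{(2+l+π_l)/2}·binom(n,l)·(l−1). -/
theorem stmt_15 (n : ℕ) (hn : 3 ≤ n) (s g : ℝ) :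
    let pl : ℕ → ℕ := fun l => l % 2
    let ω : ℕ → ℕ → ℝ := fun m l =>
      (2 : ℝ) ^ (l - 2 - pl l) * (3 : ℝ) ^ ((2 + l + pl l) / 2) *
        (m.choose l : ℝ) * ((l : ℝ) - 1)
    s ^ n - 72 * (n : ℝ) * ((n : ℝ) - 1) * s ^ (n - 2) * g ^ 2
        - 64 * ω n 3 * g ^ 3 * s ^ (n - 3)
        + ∑ l ∈ Finset.Icc 4 n, ω n l * s ^ (n - l) * (12 * g ^ 2) ^ ((l - 4 - pl l) / 2) *
            (((pl l : ℝ) - 1) * 192 * g ^ 4 - (pl l : ℝ) * 768 * g ^ 5)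
      = ∑ p ∈ Finset.range (n + 1),
          (1 - (p : ℝ)) * 2 ^ p * 6 ^ p * (n.choose p : ℝ) * g ^ p * s ^ (n - p) := by
  intro pl ω
  have h4 : 4 ≤ n + 1 := by omega
  rw [Finset.range_eq_Ico, ← Finset.sum_Ico_consecutive _ (Nat.zero_le 4) h4,
    show Finset.Ico 0 4 = Finset.Icc 0 3 from Finset.Ico_add_one_right_eq_Icc (a := 0) (b := 3)]
  have hsum : ∑ l ∈ Finset.Icc 4 n, ω n l * s ^ (n - l) * (12 * g ^ 2) ^ ((l - 4 - pl l) / 2) *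
      (((pl l : ℝ) - 1) * 192 * g ^ 4 - (pl l : ℝ) * 768 * g ^ 5)
      = ∑ l ∈ Finset.Icc 4 n,
          (1 - (l : ℝ)) * 2 ^ l * 6 ^ l * (n.choose l : ℝ) * g ^ l * s ^ (n - l) := by
    refine Finset.sum_congr rfl (fun l hl => ?_)
    simp only [Finset.mem_Icc] at hl
    rcases Nat.even_or_odd l with he | ho
    · obtain ⟨k, hk⟩ : ∃ k, l = 2 * k + 4 := by
        rcases he with ⟨m, hm⟩; exact ⟨m - 2, by omega⟩
      subst hk
      have hm : (2 * k + 4) % 2 = 0 := by omega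
      simp only [ω, pl, hm]
      have e1 : 2 * k + 4 - 2 - 0 = 2 * k + 2 := by omega
      have e2 : (2 + (2 * k + 4) + 0) / 2 = k + 3 := by omega
      have e3 : (2 * k + 4 - 4 - 0) / 2 = k := by omega
      rw [e1, e2, e3]
      push_cast
      rw [mul_pow]
      ring_nf
      rw [show (12 : ℝ) ^ k = 2 ^ (2 * k) * 3 ^ k by
        rw [pow_mul]; rw [← mul_pow]; norm_num]
      ring_nf
      rw [show (2:ℝ)^(k*4) = ((2:ℝ)^(k*2))^2 by
            rw [← pow_mul, show k*2*2 = k*4 from by omega],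
          show (6:ℝ)^(k*2) = (2:ℝ)^(k*2)*(3:ℝ)^(k*2) by rw [← mul_pow]; norm_num]
      ring
    · obtain ⟨k, hk⟩ : ∃ k, l = 2 * k + 5 := by
        rcases ho with ⟨m, hm⟩; exact ⟨m - 2, by omega⟩
      subst hk
      have hm : (2 * k + 5) % 2 = 1 := by omega
      simp only [ω, pl, hm]
      have e1 : 2 * k + 5 - 2 - 1 = 2 * k + 2 := by omega
      have e2 : (2 + (2 * k + 5) + 1) / 2 = k + 4 := by omega
      have e3 : (2 * k + 5 - 4 - 1) / 2 = k := by omega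
      rw [e1, e2, e3]
      push_cast
      rw [mul_pow]
      ring_nf
      rw [show (12 : ℝ) ^ k = 2 ^ (2 * k) * 3 ^ k by
        rw [pow_mul]; rw [← mul_pow]; norm_num]
      ring_nf
      rw [show (2:ℝ)^(k*4) = ((2:ℝ)^(k*2))^2 by
            rw [← pow_mul, show k*2*2 = k*4 from by omega],
          show (6:ℝ)^(k*2) = (2:ℝ)^(k*2)*(3:ℝ)^(k*2) by rw [← mul_pow]; norm_num]
      ring
  rw [hsum]
  congr 1
  simp only [ω, pl]
  rw [show Finset.Icc 0 3 = Finset.range 4 from by decide]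
  rw [Finset.sum_range_succ, Finset.sum_range_succ, Finset.sum_range_succ,
    Finset.sum_range_one]
  have hc2 : (n.choose 2 : ℝ) = n * (n - 1) / 2 := Nat.cast_choose_two ℝ n
  norm_num [hc2]
  ring
end
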